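/- arXiv:math/0405443 — 6 statements merged into one kernel-verified Lean document; each statement's English description precedes it below -/
import Mathlib

section
/- Let H₁ and H₂ be complex Hilbert spaces, T : H₁ → H₂ a bounded linear operator, and λ > 0. If the spectrum of T† ∘ T on H₁ is contained in the real ray [λ², ∞), then the range of the adjoint operator T† : H₂ → H₁ is a closed subspace of H₁. -/
/-- If the spectrum of `T† ∘ T` is contained in the real ray
`[λ², ∞)` for some `λ > 0`, then the range of the adjoint `T† : H₂ → H₁` is
a closed subspace of `H₁`. -/
theorem spectral_gap_adjoint_closed_range
    {H₁ H₂ : Type*}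
    [NormedAddCommGroup H₁] [InnerProductSpace ℂ H₁] [CompleteSpace H₁]
    [NormedAddCommGroup H₂] [InnerProductSpace ℂ H₂] [CompleteSpace H₂]
    (T : H₁ →L[ℂ] H₂) (lam : ℝ) (hlam : 0 < lam)
    (hspec : spectrum ℂ (ContinuousLinearMap.adjoint T ∘L T) ⊆
      Complex.ofReal '' Set.Ici (lam ^ 2)) :
    IsClosed (Set.range (⇑(ContinuousLinearMap.adjoint T)) : Set H₁) := by
  -- 0 is not in the spectrum of T†T
  have h0 : (0 : ℂ) ∉ spectrum ℂ (ContinuousLinearMap.adjoint T ∘L T) := by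
    intro h
    obtain ⟨x, hx, hx0⟩ := hspec h
    have hxpos : (0 : ℝ) < x := lt_of_lt_of_le (pow_pos hlam 2) hx
    have : x = 0 := by exact_mod_cast hx0
    linarith
  have hu : IsUnit (ContinuousLinearMap.adjoint T ∘L T) := by
    by_contra hnu
    exact h0 ((spectrum.zero_mem_iff ℂ).mpr hnu)
  obtain ⟨u, hu⟩ := hu
  -- T†T is surjective, hence so is T†
  have hsurj : Function.Surjective ⇑(ContinuousLinearMap.adjoint T) := by
    intro y
    refine ⟨T ((↑u⁻¹ : H₁ →L[ℂ] H₁) y), ?_⟩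
    have : (ContinuousLinearMap.adjoint T ∘L T) ((↑u⁻¹ : H₁ →L[ℂ] H₁) y) = y := by
      rw [← hu]
      have := u.mul_inv
      calc (↑u : H₁ →L[ℂ] H₁) ((↑u⁻¹ : H₁ →L[ℂ] H₁) y)
          = ((↑u * ↑u⁻¹ : H₁ →L[ℂ] H₁)) y := rfl
        _ = y := by rw [u.mul_inv]; rfl
    simpa using this
  rw [Set.range_eq_univ.mpr hsurj]
  exact isClosed_univ
end

section
/- Let H₀, H₁, H₂ be complex Hilbert spaces and let d₀ : H₀ → H₁ and d₁ : H₁ → H₂ be bounded linear operators forming a complex (d₁ ∘ d₀ = 0). Assume: (1) d₀ and d₁ both have closed range; (2) the first cohomology vanishes, i.e. ker d₁ ⊆ range d₀; (3) ker d₀ = {0}. Then there exists λ > 0 such that ‖d₀† u‖² + ‖d₁ u‖² ≥ λ ‖u‖² for every u ∈ H₁ (equivalently, the spectrum of the nonnegative self-adjoint operator d₀ ∘ d₀† + d₁† ∘ d₁ on H₁ is contained in [λ, ∞)). Moreover the adjoint d₁† : H₂ → H₁ has closed range. -/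
open ContinuousLinearMap Submodule

/-- If `y` is orthogonal to the range of `A`, then `A† y = 0`. -/
private lemma adjoint_eq_zero_of_orth {E F : Type*}
    [NormedAddCommGroup E] [InnerProductSpace ℂ E] [CompleteSpace E]
    [NormedAddCommGroup F] [InnerProductSpace ℂ F] [CompleteSpace F]
    (A : E →L[ℂ] F) {y : F} (hy : ∀ x : E, (inner ℂ (A x) y : ℂ) = 0) :
    ContinuousLinearMap.adjoint A y = 0 := by
  have h : (inner ℂ (ContinuousLinearMap.adjoint A y) (ContinuousLinearMap.adjoint A y) : ℂ) = 0 := by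
    rw [ContinuousLinearMap.adjoint_inner_left, ← inner_conj_symm, hy, map_zero]
  exact inner_self_eq_zero.mp h

/-- For a two-step Hilbert complex `d₀ : H₀ → H₁`,
`d₁ : H₁ → H₂` with closed ranges, vanishing first cohomology
(`ker d₁ ⊆ range d₀`) and `ker d₀ = 0`, there is `λ > 0` with
`‖d₀† u‖² + ‖d₁ u‖² ≥ λ ‖u‖²` for all `u ∈ H₁`; moreover `d₁†` has
closed range. -/
theorem hilbert_complex_spectral_gap_and_adjoint_closed_range
    {H₀ H₁ H₂ : Type*}
    [NormedAddCommGroup H₀] [InnerProductSpace ℂ H₀] [CompleteSpace H₀]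
    [NormedAddCommGroup H₁] [InnerProductSpace ℂ H₁] [CompleteSpace H₁]
    [NormedAddCommGroup H₂] [InnerProductSpace ℂ H₂] [CompleteSpace H₂]
    (d₀ : H₀ →L[ℂ] H₁) (d₁ : H₁ →L[ℂ] H₂)
    (hcomplex : d₁ ∘L d₀ = 0)
    (hclosed₀ : IsClosed (Set.range (⇑d₀) : Set H₁))
    (hclosed₁ : IsClosed (Set.range (⇑d₁) : Set H₂))
    (hH1 : (LinearMap.ker (d₁ : H₁ →ₗ[ℂ] H₂) : Set H₁) ⊆ Set.range (⇑d₀))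
    (hker₀ : LinearMap.ker (d₀ : H₀ →ₗ[ℂ] H₁) = ⊥) :
    (∃ lam : ℝ, 0 < lam ∧ ∀ u : H₁,
        lam * ‖u‖ ^ 2 ≤ ‖(ContinuousLinearMap.adjoint d₀) u‖ ^ 2 + ‖d₁ u‖ ^ 2) ∧
      IsClosed (Set.range (⇑(ContinuousLinearMap.adjoint d₁)) : Set H₁) := by
  classical
  set A₀ := ContinuousLinearMap.adjoint d₀ with hA₀def
  set A₁ := ContinuousLinearMap.adjoint d₁ with hA₁def
  set K : Submodule ℂ H₁ := LinearMap.ker (d₁ : H₁ →ₗ[ℂ] H₂) with hKdef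
  have hKclosed : IsClosed (K : Set H₁) := isClosed_ker d₁
  haveI : CompleteSpace K := hKclosed.completeSpace_coe
  haveI : CompleteSpace (Kᗮ : Submodule ℂ H₁) := K.isClosed_orthogonal.completeSpace_coe
  -- range d₀ = ker d₁
  have hcompl : ∀ x : H₀, d₁ (d₀ x) = 0 := by
    intro x
    have := congrArg (fun f : H₀ →L[ℂ] H₂ => f x) hcomplex
    simpa using this
  have hrange₀ : LinearMap.range (d₀ : H₀ →ₗ[ℂ] H₁) = K := by
    apply le_antisymm
    · rintro _ ⟨x, rfl⟩
      exact hcompl x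
    · intro x hx
      obtain ⟨y, hy⟩ := hH1 hx
      exact ⟨y, hy⟩
  -- closedness / completeness of ranges as submodules
  have hR₀closed : IsClosed ((LinearMap.range (d₀ : H₀ →ₗ[ℂ] H₁) : Submodule ℂ H₁) : Set H₁) := by
    rw [LinearMap.coe_range]; exact hclosed₀
  have hR₁closed : IsClosed ((LinearMap.range (d₁ : H₁ →ₗ[ℂ] H₂) : Submodule ℂ H₂) : Set H₂) := by
    rw [LinearMap.coe_range]; exact hclosed₁
  haveI : CompleteSpace (LinearMap.range (d₀ : H₀ →ₗ[ℂ] H₁) : Submodule ℂ H₁) := hR₀closed.completeSpace_coe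
  haveI : CompleteSpace (LinearMap.range (d₁ : H₁ →ₗ[ℂ] H₂) : Submodule ℂ H₂) := hR₁closed.completeSpace_coe
  -- lower bound for d₀
  let f₀ : H₀ →L[ℂ] (LinearMap.range (d₀ : H₀ →ₗ[ℂ] H₁) : Submodule ℂ H₁) :=
    d₀.codRestrict _ (fun x => LinearMap.mem_range_self _ x)
  have hker : LinearMap.ker (f₀ : H₀ →ₗ[ℂ] (LinearMap.range (d₀ : H₀ →ₗ[ℂ] H₁) : Submodule ℂ H₁)) = ⊥ := by
    rw [ContinuousLinearMap.ker_codRestrict]; exact hker₀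
  have hsurj : LinearMap.range (f₀ : H₀ →ₗ[ℂ] (LinearMap.range (d₀ : H₀ →ₗ[ℂ] H₁) : Submodule ℂ H₁)) = ⊤ := by
    rw [eq_top_iff]
    rintro ⟨y, x, rfl⟩ -
    exact ⟨x, rfl⟩
  let e₀ := ContinuousLinearEquiv.ofBijective f₀ hker hsurj
  set a : ℝ := max ‖(e₀.symm : (LinearMap.range (d₀ : H₀ →ₗ[ℂ] H₁) : Submodule ℂ H₁) →L[ℂ] H₀)‖ 1 with hadef
  have ha1 : (1 : ℝ) ≤ a := le_max_right _ _
  have ha0 : (0 : ℝ) < a := lt_of_lt_of_le one_pos ha1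
  have hc₀ : ∀ x : H₀, ‖x‖ ≤ a * ‖d₀ x‖ := by
    intro x
    have h := e₀.antilipschitz.le_mul_dist x 0
    simp only [map_zero, dist_zero_right] at h
    have he : ‖e₀ x‖ = ‖d₀ x‖ := rfl
    rw [he] at h
    calc ‖x‖ ≤ ‖(e₀.symm : (LinearMap.range (d₀ : H₀ →ₗ[ℂ] H₁) : Submodule ℂ H₁) →L[ℂ] H₀)‖ * ‖d₀ x‖ := by
          simpa using h
      _ ≤ a * ‖d₀ x‖ := by
          apply mul_le_mul_of_nonneg_right (le_max_left _ _) (norm_nonneg _)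
  -- lower bound for d₁ on Kᗮ
  let g₁ : (Kᗮ : Submodule ℂ H₁) →L[ℂ] (LinearMap.range (d₁ : H₁ →ₗ[ℂ] H₂) : Submodule ℂ H₂) :=
    (d₁.comp Kᗮ.subtypeL).codRestrict _ (fun x => LinearMap.mem_range_self _ _)
  have hkerg : LinearMap.ker (g₁ : (Kᗮ : Submodule ℂ H₁) →ₗ[ℂ] (LinearMap.range (d₁ : H₁ →ₗ[ℂ] H₂) : Submodule ℂ H₂)) = ⊥ := by
    rw [show LinearMap.ker (g₁ : (Kᗮ : Submodule ℂ H₁) →ₗ[ℂ] (LinearMap.range (d₁ : H₁ →ₗ[ℂ] H₂) : Submodule ℂ H₂)) = LinearMap.ker ((d₁.comp Kᗮ.subtypeL : (Kᗮ : Submodule ℂ H₁) →L[ℂ] H₂) : (Kᗮ : Submodule ℂ H₁) →ₗ[ℂ] H₂) from ContinuousLinearMap.ker_codRestrict _ _ _]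
    rw [LinearMap.ker_eq_bot']
    rintro ⟨w, hw⟩ hww
    have hwK : w ∈ K := by
      simpa [hKdef, LinearMap.mem_ker] using hww
    have : w = 0 := by
      have := (K.orthogonal_disjoint).le_bot ⟨hwK, hw⟩
      simpa using this
    exact Subtype.ext this
  have hsurjg : LinearMap.range (g₁ : (Kᗮ : Submodule ℂ H₁) →ₗ[ℂ] (LinearMap.range (d₁ : H₁ →ₗ[ℂ] H₂) : Submodule ℂ H₂)) = ⊤ := by
    rw [eq_top_iff]
    rintro ⟨z, u, rfl⟩ -
    refine ⟨⟨u - orthogonalProjection K u, sub_starProjection_mem_orthogonal u⟩,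
      Subtype.ext ?_⟩
    have hmem : (orthogonalProjection K u : H₁) ∈ K := (orthogonalProjection K u).2
    have : d₁ (orthogonalProjection K u : H₁) = 0 := hmem
    show d₁ (u - K.starProjection u) = d₁ u
    rw [map_sub, show d₁ (K.starProjection u) = 0 from this, sub_zero]
  let e₁ := ContinuousLinearEquiv.ofBijective g₁ hkerg hsurjg
  set b : ℝ := max ‖(e₁.symm : (LinearMap.range (d₁ : H₁ →ₗ[ℂ] H₂) : Submodule ℂ H₂) →L[ℂ]
    (Kᗮ : Submodule ℂ H₁))‖ 1 with hbdef
  have hb1 : (1 : ℝ) ≤ b := le_max_right _ _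
  have hb0 : (0 : ℝ) < b := lt_of_lt_of_le one_pos hb1
  have hc₁ : ∀ w : (Kᗮ : Submodule ℂ H₁), ‖(w : H₁)‖ ≤ b * ‖d₁ (w : H₁)‖ := by
    intro w
    have h := e₁.antilipschitz.le_mul_dist w 0
    simp only [map_zero, dist_zero_right] at h
    have he : ‖e₁ w‖ = ‖d₁ (w : H₁)‖ := rfl
    rw [he] at h
    have hw : ‖w‖ = ‖(w : H₁)‖ := rfl
    rw [hw] at h
    calc ‖(w : H₁)‖ ≤ ‖(e₁.symm : (LinearMap.range (d₁ : H₁ →ₗ[ℂ] H₂) : Submodule ℂ H₂) →L[ℂ]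
          (Kᗮ : Submodule ℂ H₁))‖ * ‖d₁ (w : H₁)‖ := by simpa using h
      _ ≤ b * ‖d₁ (w : H₁)‖ :=
          mul_le_mul_of_nonneg_right (le_max_left _ _) (norm_nonneg _)
  -- bound for A₀ on K
  have hA₀bound : ∀ v : H₁, v ∈ K → ‖v‖ ≤ a * ‖A₀ v‖ := by
    intro v hv
    obtain ⟨x, rfl⟩ : v ∈ LinearMap.range (d₀ : H₀ →ₗ[ℂ] H₁) := hrange₀ ▸ hv
    change ‖d₀ x‖ ≤ a * ‖A₀ (d₀ x)‖
    by_cases h0 : ‖d₀ x‖ = 0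
    · rw [h0]; positivity
    have key : ‖d₀ x‖ ^ 2 ≤ a * ‖A₀ (d₀ x)‖ * ‖d₀ x‖ := by
      have h1 : ‖d₀ x‖ ^ 2 = RCLike.re (inner ℂ (d₀ x) (d₀ x) : ℂ) :=
        (inner_self_eq_norm_sq (𝕜 := ℂ) _).symm
      have h2 : (inner ℂ (d₀ x) (d₀ x) : ℂ) = inner ℂ x (A₀ (d₀ x)) := by
        rw [hA₀def, ContinuousLinearMap.adjoint_inner_right]
      have h3 : RCLike.re (inner ℂ x (A₀ (d₀ x)) : ℂ) ≤ ‖x‖ * ‖A₀ (d₀ x)‖ := by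
        calc RCLike.re (inner ℂ x (A₀ (d₀ x)) : ℂ) ≤ ‖(inner ℂ x (A₀ (d₀ x)) : ℂ)‖ :=
              le_trans (le_abs_self _) (RCLike.abs_re_le_norm _)
          _ ≤ ‖x‖ * ‖A₀ (d₀ x)‖ := norm_inner_le_norm _ _
      calc ‖d₀ x‖ ^ 2 = RCLike.re (inner ℂ x (A₀ (d₀ x)) : ℂ) := by rw [h1, h2]
        _ ≤ ‖x‖ * ‖A₀ (d₀ x)‖ := h3
        _ ≤ (a * ‖d₀ x‖) * ‖A₀ (d₀ x)‖ :=
            mul_le_mul_of_nonneg_right (hc₀ x) (norm_nonneg _)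
        _ = a * ‖A₀ (d₀ x)‖ * ‖d₀ x‖ := by ring
    have hpos : 0 < ‖d₀ x‖ := lt_of_le_of_ne (norm_nonneg _) (Ne.symm h0)
    have key2 : ‖d₀ x‖ * ‖d₀ x‖ ≤ (a * ‖A₀ (d₀ x)‖) * ‖d₀ x‖ := by
      rw [← pow_two]; exact key
    exact le_of_mul_le_mul_right key2 hpos
  -- main inequality
  set m : ℝ := max a b with hmdef
  have hm0 : (0 : ℝ) < m := lt_of_lt_of_le ha0 (le_max_left _ _)
  have hmain : ∀ u : H₁, (m ^ 2)⁻¹ * ‖u‖ ^ 2 ≤ ‖A₀ u‖ ^ 2 + ‖d₁ u‖ ^ 2 := by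
    intro u
    set v : H₁ := (orthogonalProjection K u : H₁) with hvdef
    set w : H₁ := (orthogonalProjection Kᗮ u : H₁) with hwdef
    have hvw : v + w = u := starProjection_add_starProjection_orthogonal (K := K) u
    have hnorm : ‖u‖ ^ 2 = ‖v‖ ^ 2 + ‖w‖ ^ 2 := norm_sq_eq_add_norm_sq_projection u K
    have hvK : v ∈ K := (orthogonalProjection K u).2
    have hwKo : w ∈ Kᗮ := (orthogonalProjection Kᗮ u).2
    -- A₀ w = 0
    have hA₀w : A₀ w = 0 := by
      apply adjoint_eq_zero_of_orth
      intro x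
      have hx : d₀ x ∈ K := hrange₀ ▸ LinearMap.mem_range_self _ x
      exact (K.mem_orthogonal w).mp hwKo _ hx
    have hA₀u : A₀ u = A₀ v := by
      rw [← hvw, map_add, hA₀w, add_zero]
    have hd₁u : d₁ u = d₁ w := by
      have : d₁ v = 0 := hvK
      rw [← hvw, map_add, this, zero_add]
    -- bounds
    have hv' : ‖v‖ ≤ m * ‖A₀ v‖ :=
      le_trans (hA₀bound v hvK)
        (mul_le_mul_of_nonneg_right (le_max_left _ _) (norm_nonneg _))
    have hw' : ‖w‖ ≤ m * ‖d₁ w‖ :=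
      le_trans (hc₁ ⟨w, hwKo⟩)
        (mul_le_mul_of_nonneg_right (le_max_right _ _) (norm_nonneg _))
    have hv2 : ‖v‖ ^ 2 ≤ m ^ 2 * ‖A₀ v‖ ^ 2 := by
      have := mul_self_le_mul_self (norm_nonneg v) hv'
      calc ‖v‖ ^ 2 = ‖v‖ * ‖v‖ := sq ‖v‖
        _ ≤ (m * ‖A₀ v‖) * (m * ‖A₀ v‖) := this
        _ = m ^ 2 * ‖A₀ v‖ ^ 2 := by ring
    have hw2 : ‖w‖ ^ 2 ≤ m ^ 2 * ‖d₁ w‖ ^ 2 := by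
      have := mul_self_le_mul_self (norm_nonneg w) hw'
      calc ‖w‖ ^ 2 = ‖w‖ * ‖w‖ := sq ‖w‖
        _ ≤ (m * ‖d₁ w‖) * (m * ‖d₁ w‖) := this
        _ = m ^ 2 * ‖d₁ w‖ ^ 2 := by ring
    have hm2 : (0 : ℝ) < m ^ 2 := by positivity
    rw [hA₀u, hd₁u, hnorm]
    rw [inv_mul_le_iff₀ hm2]
    calc ‖v‖ ^ 2 + ‖w‖ ^ 2 ≤ m ^ 2 * ‖A₀ v‖ ^ 2 + m ^ 2 * ‖d₁ w‖ ^ 2 := add_le_add hv2 hw2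
      _ = m ^ 2 * (‖A₀ v‖ ^ 2 + ‖d₁ w‖ ^ 2) := by ring
  constructor
  · exact ⟨(m ^ 2)⁻¹, by positivity, hmain⟩
  -- closed range of A₁
  · set R : Submodule ℂ H₂ := LinearMap.range (d₁ : H₁ →ₗ[ℂ] H₂) with hRdef
    -- lower bound for A₁ on R
    have hA₁bound : ∀ z : H₂, z ∈ R → ‖z‖ ≤ b * ‖A₁ z‖ := by
      intro z hz
      obtain ⟨u, rfl⟩ := hz
      set w : H₁ := (orthogonalProjection Kᗮ u : H₁) with hwdef
      have hwKo : w ∈ Kᗮ := (orthogonalProjection Kᗮ u).2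
      have hd₁u : d₁ u = d₁ w := by
        have hvK : (orthogonalProjection K u : H₁) ∈ K := (orthogonalProjection K u).2
        have h1 : d₁ (orthogonalProjection K u : H₁) = 0 := hvK
        have hvw : (orthogonalProjection K u : H₁) + w = u :=
          starProjection_add_starProjection_orthogonal (K := K) u
        rw [← hvw, map_add, h1, zero_add]
      change ‖d₁ u‖ ≤ b * ‖A₁ (d₁ u)‖
      by_cases h0 : ‖d₁ u‖ = 0
      · rw [h0]; positivity
      have key : ‖d₁ u‖ ^ 2 ≤ b * ‖A₁ (d₁ u)‖ * ‖d₁ u‖ := by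
        have h1 : ‖d₁ u‖ ^ 2 = RCLike.re (inner ℂ (d₁ w) (d₁ u) : ℂ) := by
          rw [hd₁u]; exact (inner_self_eq_norm_sq (𝕜 := ℂ) _).symm
        have h2 : (inner ℂ (d₁ w) (d₁ u) : ℂ) = inner ℂ w (A₁ (d₁ u)) := by
          rw [hA₁def, ContinuousLinearMap.adjoint_inner_right]
        have h3 : RCLike.re (inner ℂ w (A₁ (d₁ u)) : ℂ) ≤ ‖w‖ * ‖A₁ (d₁ u)‖ := by
          calc RCLike.re (inner ℂ w (A₁ (d₁ u)) : ℂ) ≤ ‖(inner ℂ w (A₁ (d₁ u)) : ℂ)‖ :=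
                le_trans (le_abs_self _) (RCLike.abs_re_le_norm _)
            _ ≤ ‖w‖ * ‖A₁ (d₁ u)‖ := norm_inner_le_norm _ _
        calc ‖d₁ u‖ ^ 2 = RCLike.re (inner ℂ w (A₁ (d₁ u)) : ℂ) := by rw [h1, h2]
          _ ≤ ‖w‖ * ‖A₁ (d₁ u)‖ := h3
          _ ≤ (b * ‖d₁ w‖) * ‖A₁ (d₁ u)‖ :=
              mul_le_mul_of_nonneg_right (hc₁ ⟨w, hwKo⟩) (norm_nonneg _)
          _ = b * ‖A₁ (d₁ u)‖ * ‖d₁ w‖ := by ring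
          _ = b * ‖A₁ (d₁ u)‖ * ‖d₁ u‖ := by rw [← hd₁u]
      have hpos : 0 < ‖d₁ u‖ := lt_of_le_of_ne (norm_nonneg _) (Ne.symm h0)
      have key2 : ‖d₁ u‖ * ‖d₁ u‖ ≤ (b * ‖A₁ (d₁ u)‖) * ‖d₁ u‖ := by
        rw [← pow_two]; exact key
      exact le_of_mul_le_mul_right key2 hpos
    -- restrict A₁ to R
    let h : (R : Submodule ℂ H₂) →L[ℂ] H₁ := A₁.comp R.subtypeL
    have hanti : AntilipschitzWith ⟨b, le_of_lt hb0⟩ h := by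
      apply h.antilipschitz_of_bound
      intro z
      exact hA₁bound (z : H₂) z.2
    have hclosedh : IsClosed (Set.range ⇑h) :=
      hanti.isClosed_range h.uniformContinuous
    have hsetseq : Set.range ⇑A₁ = Set.range ⇑h := by
      apply Set.eq_of_subset_of_subset
      · rintro _ ⟨z, rfl⟩
        refine ⟨orthogonalProjection R z, ?_⟩
        have hperp : z - (orthogonalProjection R z : H₂) ∈ Rᗮ :=
          sub_starProjection_mem_orthogonal z
        have hz0 : A₁ (z - (orthogonalProjection R z : H₂)) = 0 := by
          apply adjoint_eq_zero_of_orth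
          intro x
          have hx : d₁ x ∈ R := LinearMap.mem_range_self _ x
          exact (R.mem_orthogonal _).mp hperp _ hx
        have : A₁ (orthogonalProjection R z : H₂) = A₁ z := by
          have := map_sub A₁ z ((orthogonalProjection R z : H₂))
          rw [hz0] at this
          exact (sub_eq_zero.mp this.symm).symm
        simpa [h] using this
      · rintro _ ⟨z, rfl⟩
        exact ⟨(z : H₂), rfl⟩
    rw [hsetseq]
    exact hclosedh
end

section
/- Let c > 0 and let f : ℝ → ℝ be twice differentiable on [0, ∞), with f(t) ≥ 0 for all t ≥ 0, f bounded on [0, ∞), and f''(t) ≥ c² · f(t) for all t ≥ 0. Then f(t) ≤ f(0) · exp(−c t) for all t ≥ 0. -/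
open Set Real

private lemma mono_aux (b : ℝ) (u u' : ℝ → ℝ)
    (hu : ∀ t ∈ Set.Ici b, HasDerivWithinAt u (u' t) (Set.Ici b) t)
    (h0 : ∀ t ∈ Set.Ici b, 0 ≤ u' t) : MonotoneOn u (Set.Ici b) :=
  monotoneOn_of_hasDerivWithinAt_nonneg (convex_Ici b)
    (fun t ht => (hu t ht).continuousWithinAt)
    (fun t ht => (hu t (interior_subset ht)).mono interior_subset)
    (fun t ht => h0 t (interior_subset ht))

private lemma exp_hasDerivAt (c t : ℝ) :
    HasDerivAt (fun s : ℝ => Real.exp (c * s)) (c * Real.exp (c * t)) t := by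
  have h : HasDerivAt (fun s : ℝ => c * s) c t := by
    simpa using (hasDerivAt_id t).const_mul c
  simpa [mul_comm] using h.exp

/-- If `f : ℝ → ℝ` is twice differentiable on `[0, ∞)`,
nonnegative and bounded there, and satisfies the differential inequality
`f'' ≥ c² f` with `c > 0`, then `f(t) ≤ f(0) exp(−c t)` for all `t ≥ 0`. -/
theorem differential_inequality_exponential_decay
    (c : ℝ) (hc : 0 < c) (f f' f'' : ℝ → ℝ)
    (hderiv : ∀ t ∈ Set.Ici (0 : ℝ), HasDerivWithinAt f (f' t) (Set.Ici 0) t)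
    (hderiv' : ∀ t ∈ Set.Ici (0 : ℝ), HasDerivWithinAt f' (f'' t) (Set.Ici 0) t)
    (hnonneg : ∀ t ∈ Set.Ici (0 : ℝ), 0 ≤ f t)
    (hbdd : ∃ M : ℝ, ∀ t ∈ Set.Ici (0 : ℝ), f t ≤ M)
    (hineq : ∀ t ∈ Set.Ici (0 : ℝ), c ^ 2 * f t ≤ f'' t) :
    ∀ t ∈ Set.Ici (0 : ℝ), f t ≤ f 0 * Real.exp (-(c * t)) := by
  obtain ⟨M, hM⟩ := hbdd
  -- Step 1: G t = exp(-(c t)) * (f' t + c f t) is monotone on [0,∞)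
  set G : ℝ → ℝ := fun t => Real.exp (-(c * t)) * (f' t + c * f t) with hG
  have hGd : ∀ t ∈ Set.Ici (0 : ℝ),
      HasDerivWithinAt G (Real.exp (-(c * t)) * (f'' t - c ^ 2 * f t)) (Set.Ici 0) t := by
    intro t ht
    have he : HasDerivAt (fun s : ℝ => Real.exp (-(c * s))) (-c * Real.exp (-(c * t))) t := by
      have := exp_hasDerivAt (-c) t
      simpa [neg_mul] using this
    have hsum : HasDerivWithinAt (fun s => f' s + c * f s) (f'' t + c * f' t) (Set.Ici 0) t :=
      (hderiv' t ht).add ((hderiv t ht).const_mul c)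
    have := (he.hasDerivWithinAt.fun_mul hsum)
    refine this.congr_deriv ?_
    ring
  have hGmono : MonotoneOn G (Set.Ici 0) := by
    apply mono_aux 0 G _ hGd
    intro t ht
    have h1 : 0 ≤ f'' t - c ^ 2 * f t := sub_nonneg.2 (hineq t ht)
    positivity
  -- Step 2: f' t + c * f t ≤ 0 on [0,∞)
  have hkey : ∀ t ∈ Set.Ici (0 : ℝ), f' t + c * f t ≤ 0 := by
    by_contra hcon
    push_neg at hcon
    obtain ⟨t₀, ht₀, hpos⟩ := hcon
    set a : ℝ := Real.exp (-(c * t₀)) * (f' t₀ + c * f t₀) with ha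
    have hapos : 0 < a := mul_pos (Real.exp_pos _) hpos
    -- for t ≥ t₀ : f' t + c f t ≥ a * exp (c t)
    have hlow : ∀ t ∈ Set.Ici t₀, a * Real.exp (c * t) ≤ f' t + c * f t := by
      intro t ht
      have h1 : G t₀ ≤ G t := hGmono ht₀ (Set.mem_Ici.2 (le_trans (Set.mem_Ici.1 ht₀) (Set.mem_Ici.1 ht))) ht
      have h2 : a ≤ Real.exp (-(c * t)) * (f' t + c * f t) := h1
      have h3 := mul_le_mul_of_nonneg_left h2 (Real.exp_pos (c * t)).le
      calc a * Real.exp (c * t) = Real.exp (c * t) * a := mul_comm _ _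
        _ ≤ Real.exp (c * t) * (Real.exp (-(c * t)) * (f' t + c * f t)) := h3
        _ = f' t + c * f t := by
            rw [← mul_assoc, ← Real.exp_add]
            simp
    -- E t = exp(c t) * f t - (a/(2c)) * exp(2 c t) is monotone on [t₀,∞)
    set E : ℝ → ℝ := fun t => Real.exp (c * t) * f t - a / (2 * c) * Real.exp (2 * c * t) with hE
    have hEmono : MonotoneOn E (Set.Ici t₀) := by
      apply mono_aux t₀ E
          (fun t => Real.exp (c * t) * ((f' t + c * f t) - a * Real.exp (c * t)))
      · intro t ht
        have htI : t ∈ Set.Ici (0 : ℝ) := Set.mem_Ici.2 (le_trans (Set.mem_Ici.1 ht₀) (Set.mem_Ici.1 ht))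
        have h1 : HasDerivWithinAt (fun s => Real.exp (c * s) * f s)
            (c * Real.exp (c * t) * f t + Real.exp (c * t) * f' t) (Set.Ici t₀) t :=
          (exp_hasDerivAt c t).hasDerivWithinAt.mul
            ((hderiv t htI).mono (Set.Ici_subset_Ici.2 ht₀))
        have h2 : HasDerivWithinAt (fun s => a / (2 * c) * Real.exp (2 * c * s))
            (a / (2 * c) * (2 * c * Real.exp (2 * c * t))) (Set.Ici t₀) t :=
          ((exp_hasDerivAt (2 * c) t).hasDerivWithinAt.const_mul (a / (2 * c)))
        have := h1.sub h2
        refine this.congr_deriv ?_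
        have h2c : (2 : ℝ) * c ≠ 0 := by positivity
        field_simp
        rw [show c * t * 2 = c * t + c * t by ring, Real.exp_add]
        ring
      · intro t ht
        have h1 : a * Real.exp (c * t) ≤ f' t + c * f t := hlow t ht
        have h2 : 0 ≤ (f' t + c * f t) - a * Real.exp (c * t) := sub_nonneg.2 h1
        positivity
    -- derive contradiction with boundedness
    set K : ℝ := min (E t₀) 0 with hK
    have hKle : K ≤ 0 := min_le_right _ _
    have hfM : 0 ≤ M := le_trans (hnonneg 0 Set.self_mem_Ici) (hM 0 Set.self_mem_Ici)
    set T : ℝ := max t₀ (2 * (M - K) / a + 1) with hT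
    have hTt₀ : t₀ ≤ T := le_max_left _ _
    have hT0 : (0 : ℝ) ≤ T := le_trans ht₀ hTt₀
    have hTbig : 2 * (M - K) / a + 1 ≤ T := le_max_right _ _
    -- f T ≥ (a/(2c)) exp(cT) + K
    have hET : E t₀ ≤ E T := hEmono (le_refl t₀ : t₀ ∈ Set.Ici t₀) hTt₀ hTt₀
    have hfT : a / (2 * c) * Real.exp (c * T) + K * Real.exp (-(c * T)) ≤ f T := by
      have h1 : a / (2 * c) * Real.exp (2 * c * T) + K ≤ Real.exp (c * T) * f T := by
        have : K ≤ E t₀ := min_le_left _ _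
        have := le_trans this hET
        simp only [hE] at this
        linarith
      have h2 := mul_le_mul_of_nonneg_left h1 (Real.exp_pos (-(c * T))).le
      calc a / (2 * c) * Real.exp (c * T) + K * Real.exp (-(c * T))
          = Real.exp (-(c * T)) * (a / (2 * c) * Real.exp (2 * c * T) + K) := by
            rw [show 2 * c * T = c * T + c * T by ring, Real.exp_add]
            have hinv : Real.exp (-(c * T)) * Real.exp (c * T) = 1 := by
              rw [← Real.exp_add]; simp
            linear_combination (-(a / (2 * c)) * Real.exp (c * T)) * hinv
        _ ≤ Real.exp (-(c * T)) * (Real.exp (c * T) * f T) := h2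
        _ = f T := by rw [← mul_assoc, ← Real.exp_add]; simp
    have hKT : K ≤ K * Real.exp (-(c * T)) := by
      have he1 : Real.exp (-(c * T)) ≤ 1 := by
        apply Real.exp_le_one_iff.2
        nlinarith
      nlinarith [Real.exp_pos (-(c * T))]
    have hexpT : c * T + 1 ≤ Real.exp (c * T) := Real.add_one_le_exp _
    have hfinal : M < f T := by
      have hcT : 2 * (M - K) / a + 1 ≤ T := hTbig
      have h1 : a / (2 * c) * Real.exp (c * T) + K ≤ f T := le_trans (by nlinarith) hfT
      have h2 : 2 * (M - K) + a ≤ a * T := by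
        have := mul_le_mul_of_nonneg_left hcT (le_of_lt hapos)
        have hdiv : a * (2 * (M - K) / a) = 2 * (M - K) := by field_simp
        nlinarith
      have h3 : M - K < a / (2 * c) * Real.exp (c * T) := by
        have h4 : a / (2 * c) * (c * T + 1) ≤ a / (2 * c) * Real.exp (c * T) := by
          apply mul_le_mul_of_nonneg_left hexpT
          positivity
        have h5 : M - K < a / (2 * c) * (c * T + 1) := by
          rw [div_mul_eq_mul_div, lt_div_iff₀ (by positivity : (0:ℝ) < 2 * c)]
          nlinarith [mul_le_mul_of_nonneg_left h2 hc.le, mul_pos hapos hc]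
        linarith
      linarith
    exact absurd (hM T hT0) (not_le.2 hfinal)
  -- Step 3: F t = exp(c t) * f t is antitone, conclude
  intro t ht
  set F : ℝ → ℝ := fun s => -(Real.exp (c * s) * f s) with hF
  have hFmono : MonotoneOn F (Set.Ici 0) := by
    apply mono_aux 0 F (fun s => -(Real.exp (c * s) * (f' s + c * f s)))
    · intro s hs
      have h1 : HasDerivWithinAt (fun s => Real.exp (c * s) * f s)
          (c * Real.exp (c * s) * f s + Real.exp (c * s) * f' s) (Set.Ici 0) s :=
        (exp_hasDerivAt c s).hasDerivWithinAt.mul (hderiv s hs)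
      have := h1.fun_neg
      refine this.congr_deriv ?_
      ring
    · intro s hs
      have := hkey s hs
      have he := (Real.exp_pos (c * s)).le
      nlinarith
  have h1 : F 0 ≤ F t := hFmono (le_refl (0:ℝ) : (0:ℝ) ∈ Set.Ici (0:ℝ)) ht ht
  simp only [hF, mul_zero, Real.exp_zero, one_mul, neg_le_neg_iff] at h1
  -- h1 : exp (c t) * f t ≤ f 0
  have h2 := mul_le_mul_of_nonneg_left h1 (Real.exp_pos (-(c * t))).le
  calc f t = Real.exp (-(c * t)) * (Real.exp (c * t) * f t) := by
        rw [← mul_assoc, ← Real.exp_add]; simp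
    _ ≤ Real.exp (-(c * t)) * f 0 := h2
    _ = f 0 * Real.exp (-(c * t)) := mul_comm _ _
end

section
/- Let H be a real Hilbert space, λ > 0, and Q : H → H a bounded linear operator with ⟨Q x, x⟩ ≥ λ ‖x‖² for all x ∈ H. Let u : ℝ → H be continuously differentiable with both t ↦ u(t) and t ↦ u'(t) square-integrable on ℝ (with respect to Lebesgue measure). Then (∫_ℝ ‖−u'(t) + Q(u(t))‖² dt)^{1/2} ≥ λ · (∫_ℝ ‖u(t)‖² dt)^{1/2}. -/
open scoped RealInnerProductSpace

open MeasureTheory Filter Set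

/-- (L² coercivity on the cylinder.) If `Q` is a bounded
coercive operator on a real Hilbert space and `u : ℝ → H` is continuously
differentiable with `u` and `u'` square-integrable, then
`‖−u' + Q u‖_{L²} ≥ λ ‖u‖_{L²}`. -/
theorem cylinder_operator_L2_coercivity
    {H : Type*} [NormedAddCommGroup H] [InnerProductSpace ℝ H] [CompleteSpace H]
    (lam : ℝ) (hlam : 0 < lam)
    (Q : H →L[ℝ] H)
    (hcoercive : ∀ x : H, lam * ‖x‖ ^ 2 ≤ ⟪Q x, x⟫)
    (u u' : ℝ → H)
    (hderiv : ∀ t : ℝ, HasDerivAt u (u' t) t)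
    (hcont : Continuous u')
    (hu2 : MeasureTheory.Integrable (fun t : ℝ => ‖u t‖ ^ 2))
    (hu'2 : MeasureTheory.Integrable (fun t : ℝ => ‖u' t‖ ^ 2)) :
    lam * Real.sqrt (∫ t : ℝ, ‖u t‖ ^ 2) ≤
      Real.sqrt (∫ t : ℝ, ‖-u' t + Q (u t)‖ ^ 2) := by
  have hu_cont : Continuous u :=
    continuous_iff_continuousAt.2 fun t => (hderiv t).continuousAt
  set g : ℝ → H := fun t => -u' t + Q (u t) with hg_def
  have hg_cont : Continuous g := hcont.neg.add (Q.continuous.comp hu_cont)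
  -- `‖g‖²` is integrable
  have hg2 : Integrable (fun t : ℝ => ‖g t‖ ^ 2) := by
    refine Integrable.mono' (((hu'2.const_mul 2)).add ((hu2.const_mul (2 * ‖Q‖ ^ 2))))
      ((hg_cont.norm.pow 2).aestronglyMeasurable) (Filter.Eventually.of_forall fun t => ?_)
    have h1 : ‖g t‖ ≤ ‖u' t‖ + ‖Q‖ * ‖u t‖ := by
      calc ‖g t‖ ≤ ‖-u' t‖ + ‖Q (u t)‖ := norm_add_le _ _
        _ ≤ ‖u' t‖ + ‖Q‖ * ‖u t‖ := by
            rw [norm_neg]; exact add_le_add (le_refl _) (Q.le_opNorm _)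
    have h2 : (0:ℝ) ≤ ‖u' t‖ := norm_nonneg _
    have h3 : (0:ℝ) ≤ ‖u t‖ := norm_nonneg _
    have h4 : (0:ℝ) ≤ ‖g t‖ := norm_nonneg _
    have h5 : (0:ℝ) ≤ ‖Q‖ := norm_nonneg _
    rw [Real.norm_of_nonneg (by positivity)]
    simp only [Pi.add_apply]
    nlinarith [sq_nonneg (‖u' t‖ - ‖Q‖ * ‖u t‖)]
  -- the derivative of `f t = ‖u t‖²`
  set φ : ℝ → ℝ := fun t => 2 * ⟪u t, u' t⟫ with hφ_def
  have hfd : ∀ t : ℝ, HasDerivAt (fun s => ‖u s‖ ^ 2) (φ t) t := fun t => (hderiv t).norm_sq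
  have hφ_cont : Continuous φ := (continuous_const.mul (hu_cont.inner hcont))
  have hφ_int : Integrable φ := by
    refine Integrable.mono' (hu2.add hu'2) hφ_cont.aestronglyMeasurable
      (Filter.Eventually.of_forall fun t => ?_)
    have h1 : |⟪u t, u' t⟫| ≤ ‖u t‖ * ‖u' t‖ := abs_real_inner_le_norm _ _
    have h2 : (0:ℝ) ≤ ‖u' t‖ := norm_nonneg _
    have h3 : (0:ℝ) ≤ ‖u t‖ := norm_nonneg _
    rw [Real.norm_eq_abs, hφ_def]
    rw [abs_mul, abs_two]
    simp only [Pi.add_apply]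
    nlinarith [sq_nonneg (‖u t‖ - ‖u' t‖), abs_nonneg ⟪u t, u' t⟫]
  -- `∫ φ ≤ 0`
  have hL : Tendsto (fun T : ℝ => ∫ t in (-T)..T, φ t) atTop (nhds (∫ t, φ t)) :=
    intervalIntegral_tendsto_integral hφ_int tendsto_neg_atTop_atBot tendsto_id
  have hFTC : ∀ T : ℝ, ∫ t in (-T)..T, φ t = ‖u T‖ ^ 2 - ‖u (-T)‖ ^ 2 := fun T =>
    intervalIntegral.integral_eq_sub_of_hasDerivAt (fun t _ => hfd t)
      (hφ_cont.intervalIntegrable _ _)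
  have hphi_le : (∫ t, φ t) ≤ 0 := by
    by_contra h
    push_neg at h
    set L := ∫ t, φ t
    have hev : ∀ᶠ T : ℝ in atTop, L / 2 < ∫ t in (-T)..T, φ t :=
      hL.eventually (eventually_gt_nhds (half_lt_self h))
    have hev2 : ∀ᶠ T : ℝ in atTop, L / 2 ≤ ‖u T‖ ^ 2 := by
      filter_upwards [hev] with T hT
      rw [hFTC T] at hT
      nlinarith [sq_nonneg ‖u (-T)‖]
    obtain ⟨a, ha⟩ := hev2.exists_forall_of_atTop
    have hconst : Integrable (fun _ : ℝ => L / 2) (volume.restrict (Ioi a)) := by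
      refine Integrable.mono' (hu2.restrict (s := Ioi a)) aestronglyMeasurable_const ?_
      rw [ae_restrict_iff' measurableSet_Ioi]
      exact Filter.Eventually.of_forall fun t ht => by
        rw [Real.norm_of_nonneg (by positivity)]
        exact ha t (le_of_lt ht)
    rw [integrable_const_iff] at hconst
    rcases hconst with h0 | hfin
    · exact absurd h0 (by positivity)
    · have hfin := hfin.measure_univ_lt_top
      rw [Measure.restrict_apply_univ, Real.volume_Ioi] at hfin
      exact absurd hfin (by simp)
  -- pointwise coercivity
  have hkey : ∀ t : ℝ, lam * ‖u t‖ ^ 2 ≤ ⟪g t, u t⟫ + (1 / 2) * φ t := by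
    intro t
    have h1 : ⟪g t, u t⟫ = -⟪u' t, u t⟫ + ⟪Q (u t), u t⟫ := by
      rw [hg_def]; simp [inner_add_left, inner_neg_left]
    have h2 : ⟪u t, u' t⟫ = ⟪u' t, u t⟫ := real_inner_comm _ _
    have h3 := hcoercive (u t)
    rw [h1, hφ_def]
    simp only [h2]
    linarith
  -- integrability of the inner product
  have hgu_int : Integrable (fun t : ℝ => ⟪g t, u t⟫) := by
    refine Integrable.mono' (hg2.add hu2) (hg_cont.inner hu_cont).aestronglyMeasurable
      (Filter.Eventually.of_forall fun t => ?_)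
    have h1 : |⟪g t, u t⟫| ≤ ‖g t‖ * ‖u t‖ := abs_real_inner_le_norm _ _
    rw [Real.norm_eq_abs]
    simp only [Pi.add_apply]
    nlinarith [sq_nonneg (‖g t‖ - ‖u t‖), norm_nonneg (g t), norm_nonneg (u t)]
  have hnorm_int : Integrable (fun t : ℝ => ‖g t‖ * ‖u t‖) := by
    refine Integrable.mono' (hg2.add hu2) (hg_cont.norm.mul hu_cont.norm).aestronglyMeasurable
      (Filter.Eventually.of_forall fun t => ?_)
    rw [Real.norm_of_nonneg (by positivity)]
    simp only [Pi.add_apply]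
    nlinarith [sq_nonneg (‖g t‖ - ‖u t‖), norm_nonneg (g t), norm_nonneg (u t)]
  -- integrate the pointwise inequality
  have hstep1 : lam * ∫ t, ‖u t‖ ^ 2 ≤ ∫ t, ⟪g t, u t⟫ := by
    have h1 : lam * ∫ t, ‖u t‖ ^ 2 ≤ ∫ t, (⟪g t, u t⟫ + (1 / 2) * φ t) := by
      rw [← integral_const_mul]
      exact integral_mono (hu2.const_mul lam) (hgu_int.add (hφ_int.const_mul _))
        fun t => hkey t
    rw [integral_add hgu_int (hφ_int.const_mul _), integral_const_mul] at h1
    linarith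
  -- Cauchy–Schwarz in L²
  have hmemg : MemLp g (ENNReal.ofReal 2) := by
    rw [show ENNReal.ofReal 2 = 2 by norm_num]
    exact (memLp_two_iff_integrable_sq_norm hg_cont.aestronglyMeasurable).2 hg2
  have hmemu : MemLp u (ENNReal.ofReal 2) := by
    rw [show ENNReal.ofReal 2 = 2 by norm_num]
    exact (memLp_two_iff_integrable_sq_norm hu_cont.aestronglyMeasurable).2 hu2
  have hCS : ∫ t, ‖g t‖ * ‖u t‖ ≤
      Real.sqrt (∫ t, ‖g t‖ ^ 2) * Real.sqrt (∫ t, ‖u t‖ ^ 2) := by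
    have h := integral_mul_norm_le_Lp_mul_Lq (μ := volume)
      (⟨by norm_num, by norm_num, by norm_num⟩ : Real.HolderConjugate 2 2) hmemg hmemu
    have e1 : ∀ v : H, ‖v‖ ^ (2:ℝ) = ‖v‖ ^ (2:ℕ) := fun v => by
      rw [← Real.rpow_natCast ‖v‖ 2]; norm_num
    simp only [e1] at h
    rw [Real.sqrt_eq_rpow, Real.sqrt_eq_rpow]
    exact h
  have hstep2 : ∫ t, ⟪g t, u t⟫ ≤ ∫ t, ‖g t‖ * ‖u t‖ :=
    integral_mono hgu_int hnorm_int fun t => real_inner_le_norm _ _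
  -- conclude
  set A := Real.sqrt (∫ t, ‖u t‖ ^ 2) with hA
  set B := Real.sqrt (∫ t, ‖g t‖ ^ 2) with hB
  have hInt_nonneg : (0:ℝ) ≤ ∫ t, ‖u t‖ ^ 2 := integral_nonneg fun t => by positivity
  have hAsq : A ^ 2 = ∫ t, ‖u t‖ ^ 2 := Real.sq_sqrt hInt_nonneg
  have hmain : lam * A ^ 2 ≤ B * A := by
    rw [hAsq]
    calc lam * ∫ t, ‖u t‖ ^ 2 ≤ ∫ t, ⟪g t, u t⟫ := hstep1
      _ ≤ ∫ t, ‖g t‖ * ‖u t‖ := hstep2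
      _ ≤ B * A := hCS
  have hA0 : 0 ≤ A := Real.sqrt_nonneg _
  have hB0 : 0 ≤ B := Real.sqrt_nonneg _
  rcases eq_or_lt_of_le hA0 with hA' | hA'
  · rw [← hA']; simpa using hB0
  · nlinarith
end

section
/- Let H be a real Hilbert space, λ > 0, and Q : H → H a bounded self-adjoint linear operator with ⟨Q x, x⟩ ≥ λ ‖x‖² for all x ∈ H. Then for every continuous square-integrable f : ℝ → H there exists a unique continuously differentiable square-integrable u : ℝ → H satisfying −u'(t) + Q(u(t)) = f(t) for all t ∈ ℝ; moreover (∫_ℝ ‖u(t)‖² dt)^{1/2} ≤ λ^{-1} (∫_ℝ ‖f(t)‖² dt)^{1/2}. -/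
open scoped RealInnerProductSpace
open MeasureTheory Set Filter
open scoped Topology

set_option maxHeartbeats 1000000

section
variable {H : Type*} [NormedAddCommGroup H] [InnerProductSpace ℝ H] [CompleteSpace H]

/-- derivative of the semigroup applied to a vector -/
lemma semigroup_hasDerivAt (Q : H →L[ℝ] H) (x : H) (s : ℝ) :
    HasDerivAt (fun s : ℝ => NormedSpace.exp (s • Q) x) (Q (NormedSpace.exp (s • Q) x)) s := by
  have h := (hasDerivAt_exp_smul_const' (𝕂 := ℝ) Q s).clm_apply (hasDerivAt_const s x)
  simpa using h

/-- decay estimate for the semigroup of `-Q`, `Q` coercive -/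
lemma semigroup_decay (lam : ℝ) (Q : H →L[ℝ] H)
    (hcoercive : ∀ x : H, lam * ‖x‖ ^ 2 ≤ ⟪Q x, x⟫) (x : H) {s : ℝ} (hs : 0 ≤ s) :
    ‖NormedSpace.exp (s • (-Q)) x‖ ≤ Real.exp (-(lam * s)) * ‖x‖ := by
  set v : ℝ → H := fun s => NormedSpace.exp (s • (-Q)) x with hv
  have hvd : ∀ s : ℝ, HasDerivAt v (-(Q (v s))) s := by
    intro s
    have := semigroup_hasDerivAt (-Q) x s
    simpa [hv] using this
  set g : ℝ → ℝ := fun s => ⟪v s, v s⟫ * Real.exp (2 * lam * s) with hg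
  have hgd : ∀ s : ℝ, HasDerivAt g
      ((⟪v s, -(Q (v s))⟫ + ⟪-(Q (v s)), v s⟫) * Real.exp (2 * lam * s)
        + ⟪v s, v s⟫ * (Real.exp (2 * lam * s) * (2 * lam))) s := by
    intro s
    exact (((hvd s).inner ℝ (hvd s))).mul
      ((Real.hasDerivAt_exp (2 * lam * s)).comp s (by simpa using (hasDerivAt_id s).const_mul (2*lam)))
  have hanti : Antitone g := by
    apply antitone_of_deriv_nonpos
    · exact fun s => ((hgd s).differentiableAt)
    · intro s
      rw [(hgd s).deriv]
      have h1 : lam * ‖v s‖ ^ 2 ≤ ⟪Q (v s), v s⟫ := hcoercive (v s)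
      have h2 : ⟪v s, -(Q (v s))⟫ = -⟪Q (v s), v s⟫ := by
        rw [inner_neg_right, real_inner_comm]
      have h3 : ⟪-(Q (v s)), v s⟫ = -⟪Q (v s), v s⟫ := by rw [inner_neg_left]
      have h4 : ⟪v s, v s⟫ = ‖v s‖ ^ 2 := real_inner_self_eq_norm_sq (v s)
      rw [h2, h3, h4]
      have he : (0:ℝ) < Real.exp (2 * lam * s) := Real.exp_pos _
      nlinarith [he, h1]
  have hkey : g s ≤ g 0 := hanti hs
  have h0 : g 0 = ‖x‖ ^ 2 := by
    simp [hg, hv, NormedSpace.exp_zero, real_inner_self_eq_norm_sq]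
  have h4 : ⟪v s, v s⟫ = ‖v s‖ ^ 2 := real_inner_self_eq_norm_sq (v s)
  rw [h0, hg] at hkey
  simp only [h4] at hkey
  have he : (0:ℝ) < Real.exp (2 * lam * s) := Real.exp_pos _
  have hsq : ‖v s‖ ^ 2 ≤ (Real.exp (-(lam * s)) * ‖x‖) ^ 2 := by
    have : (Real.exp (-(lam*s)))^2 = (Real.exp (2*lam*s))⁻¹ := by
      rw [← Real.exp_nat_mul]
      rw [← Real.exp_neg]
      ring_nf
    rw [mul_pow, this, inv_mul_eq_div, le_div_iff₀ he]
    exact hkey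
  have := Real.sqrt_le_sqrt hsq
  rwa [Real.sqrt_sq (norm_nonneg _), Real.sqrt_sq (by positivity)] at this
end


lemma ker_integrableOn (lam : ℝ) (hlam : 0 < lam) (t : ℝ) :
    IntegrableOn (fun r => Real.exp (lam * (t - r))) (Ioi t) := by
  have h : (fun r => Real.exp (lam * (t - r)))
      = fun r => Real.exp (lam * t) * Real.exp (-lam * r) := by
    funext r; rw [← Real.exp_add]; ring_nf
  rw [h]
  exact (exp_neg_integrableOn_Ioi t hlam).const_mul _

lemma ker_integral (lam : ℝ) (hlam : 0 < lam) (t : ℝ) :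
    ∫ r in Ioi t, Real.exp (lam * (t - r)) = lam⁻¹ := by
  have hderiv : ∀ x ∈ Ioi t, HasDerivAt (fun r => -lam⁻¹ * Real.exp (lam * (t - r)))
      (Real.exp (lam * (t - x))) x := by
    intro x _
    have h1 : HasDerivAt (fun r : ℝ => lam * (t - r)) (-lam) x := by
      simpa using ((hasDerivAt_id x).const_sub t).const_mul lam
    have h2 := (Real.hasDerivAt_exp (lam * (t - x))).comp x h1
    have h3 := h2.const_mul (-lam⁻¹)
    refine h3.congr_deriv ?_
    field_simp [hlam.ne']
  have htend : Tendsto (fun r => -lam⁻¹ * Real.exp (lam * (t - r))) atTop (𝓝 0) := by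
    have h1 : Tendsto (fun r : ℝ => lam * (t - r)) atTop atBot := by
      apply Tendsto.const_mul_atBot hlam
      have : Tendsto (fun r : ℝ => -r) atTop atBot := tendsto_neg_atBot_iff.mpr tendsto_id
      exact (tendsto_atBot_add_const_left atTop t this).congr fun x => by ring
    have h2 := Real.tendsto_exp_atBot.comp h1
    have := h2.const_mul (-lam⁻¹)
    simpa using this
  have := integral_Ioi_of_hasDerivAt_of_tendsto
    (Continuous.continuousWithinAt (by continuity)) hderiv (ker_integrableOn lam hlam t) htend
  rw [this]; simp

lemma ker_integrableOn_Iio (lam : ℝ) (hlam : 0 < lam) (r : ℝ) :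
    IntegrableOn (fun t => Real.exp (lam * (t - r))) (Iio r) := by
  have A : MeasurableEmbedding fun x : ℝ => -x :=
    (Homeomorph.neg ℝ).isClosedEmbedding.measurableEmbedding
  have hmeas : volume.restrict (Iio r)
      = Measure.map Neg.neg (volume.restrict (Ioi (-r))) := by
    conv_lhs => rw [← Measure.map_neg_eq_self (volume : Measure ℝ)]
    rw [A.restrict_map]
    congr 1
    ext x
    simp [Set.mem_preimage, neg_lt]
  rw [IntegrableOn, hmeas, A.integrable_map_iff]
  have := ker_integrableOn lam hlam (-r)
  apply this.congr_fun ?_ measurableSet_Ioi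
  intro x _
  simp only [Function.comp]
  ring_nf

lemma ker_integral_Iio (lam : ℝ) (hlam : 0 < lam) (r : ℝ) :
    ∫ t in Iio r, Real.exp (lam * (t - r)) = lam⁻¹ := by
  rw [← integral_Iic_eq_integral_Iio]
  have h := integral_comp_neg_Iic r (fun t => Real.exp (lam * (-t - r)))
  rw [show ∫ t in Iic r, Real.exp (lam * (t - r))
      = ∫ t in Iic r, Real.exp (lam * (- -t - r)) by simp]
  rw [h]
  rw [← ker_integral lam hlam (-r)]
  apply setIntegral_congr_fun measurableSet_Ioi
  intro x _
  ring_nf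



lemma ker_mul_integrableOn (lam : ℝ) (hlam : 0 < lam) (t : ℝ) {F : ℝ → ℝ}
    (hF : Continuous F) (hF2 : Integrable (fun r => F r ^ 2)) :
    IntegrableOn (fun r => Real.exp (lam * (t - r)) * F r) (Ioi t) := by
  have hb : IntegrableOn (fun r => (Real.exp ((2 * lam) * (t - r)) + F r ^ 2) / 2) (Ioi t) :=
    ((ker_integrableOn (2 * lam) (by linarith) t).add hF2.integrableOn).div_const 2
  refine Integrable.mono' hb ((Continuous.mul (by continuity) hF).aestronglyMeasurable) ?_
  refine Eventually.of_forall fun r => ?_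
  have h1 : Real.exp ((2 * lam) * (t - r)) = Real.exp (lam * (t - r)) ^ 2 := by
    rw [← Real.exp_nat_mul]; ring_nf
  rw [Real.norm_eq_abs, abs_mul, abs_of_pos (Real.exp_pos _), h1]
  have h2 : (0:ℝ) ≤ Real.exp (lam * (t - r)) := (Real.exp_pos _).le
  nlinarith [sq_nonneg (Real.exp (lam * (t - r)) - |F r|), sq_abs (F r), abs_nonneg (F r)]

lemma ker_mul_sq_integrableOn (lam : ℝ) (hlam : 0 < lam) (t : ℝ) {F : ℝ → ℝ}
    (hF : Continuous F) (hF2 : Integrable (fun r => F r ^ 2)) :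
    IntegrableOn (fun r => Real.exp (lam * (t - r)) * F r ^ 2) (Ioi t) := by
  refine Integrable.mono' hF2.integrableOn
    ((Continuous.mul (by continuity) (by continuity)).aestronglyMeasurable) ?_
  rw [ae_restrict_iff' measurableSet_Ioi]
  refine Eventually.of_forall fun r hr => ?_
  have h1 : Real.exp (lam * (t - r)) ≤ 1 := by
    rw [Real.exp_le_one_iff]
    have : t - r ≤ 0 := by simp at hr; linarith
    nlinarith
  rw [Real.norm_eq_abs, abs_mul, abs_of_pos (Real.exp_pos _), abs_of_nonneg (sq_nonneg (F r))]
  nlinarith [sq_nonneg (F r), Real.exp_pos (lam * (t - r))]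

lemma ker_CS (lam : ℝ) (hlam : 0 < lam) (t : ℝ) {F : ℝ → ℝ}
    (hF : Continuous F) (hFnn : ∀ r, 0 ≤ F r) (hF2 : Integrable (fun r => F r ^ 2)) :
    (∫ r in Ioi t, Real.exp (lam * (t - r)) * F r) ^ 2
      ≤ lam⁻¹ * ∫ r in Ioi t, Real.exp (lam * (t - r)) * F r ^ 2 := by
  set a : ℝ → ℝ := fun r => Real.exp (lam / 2 * (t - r)) with ha
  have haa : ∀ r, a r * a r = Real.exp (lam * (t - r)) := by
    intro r; rw [ha, ← Real.exp_add]; ring_nf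
  have hpq : Real.HolderConjugate 2 2 := Real.HolderConjugate.two_two
  have hacont : Continuous a := by continuity
  have hma : MemLp a (ENNReal.ofReal 2) (volume.restrict (Ioi t)) := by
    rw [show ENNReal.ofReal 2 = 2 by norm_num]
    rw [memLp_two_iff_integrable_sq hacont.aestronglyMeasurable.restrict]
    apply (ker_integrableOn lam hlam t).congr_fun ?_ measurableSet_Ioi
    intro r _; beta_reduce; rw [sq, haa]
  have hmb : MemLp (fun r => a r * F r) (ENNReal.ofReal 2) (volume.restrict (Ioi t)) := by
    rw [show ENNReal.ofReal 2 = 2 by norm_num]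
    rw [memLp_two_iff_integrable_sq (f := fun r => a r * F r) (hacont.mul hF).aestronglyMeasurable.restrict]
    apply (ker_mul_sq_integrableOn lam hlam t hF hF2).congr_fun ?_ measurableSet_Ioi
    intro r _; beta_reduce; rw [mul_pow, sq (a r), haa]
  have hH := integral_mul_le_Lp_mul_Lq_of_nonneg (μ := volume.restrict (Ioi t)) hpq
    (Eventually.of_forall fun r => (Real.exp_pos _).le)
    (Eventually.of_forall fun r => mul_nonneg (Real.exp_pos _).le (hFnn r)) hma hmb
  have heq1 : ∫ r in Ioi t, a r * (a r * F r) = ∫ r in Ioi t, Real.exp (lam * (t - r)) * F r := by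
    apply setIntegral_congr_fun measurableSet_Ioi
    intro r _; beta_reduce; rw [← mul_assoc, haa]
  have heq2 : ∫ r in Ioi t, a r ^ (2:ℝ) = lam⁻¹ := by
    rw [← ker_integral lam hlam t]
    apply setIntegral_congr_fun measurableSet_Ioi
    intro r _
    beta_reduce
    rw [show (2:ℝ) = ((2:ℕ):ℝ) by norm_num, Real.rpow_natCast, sq, haa]
  have heq3 : ∫ r in Ioi t, (a r * F r) ^ (2:ℝ)
      = ∫ r in Ioi t, Real.exp (lam * (t - r)) * F r ^ 2 := by
    apply setIntegral_congr_fun measurableSet_Ioi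
    intro r _
    beta_reduce
    rw [show (2:ℝ) = ((2:ℕ):ℝ) by norm_num, Real.rpow_natCast, mul_pow, sq (a r), haa]
  rw [heq1, heq2, heq3] at hH
  set I := ∫ r in Ioi t, Real.exp (lam * (t - r)) * F r with hI
  set J := ∫ r in Ioi t, Real.exp (lam * (t - r)) * F r ^ 2 with hJ
  have hJ0 : 0 ≤ J := by
    rw [hJ]
    apply setIntegral_nonneg measurableSet_Ioi
    intro r _; positivity
  have hK0 : (0:ℝ) ≤ lam⁻¹ := by positivity
  have h12 : lam⁻¹ ^ ((1:ℝ)/2) * J ^ ((1:ℝ)/2) = Real.sqrt lam⁻¹ * Real.sqrt J := by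
    rw [Real.sqrt_eq_rpow, Real.sqrt_eq_rpow]
  rw [h12] at hH
  calc I ^ 2 ≤ (Real.sqrt lam⁻¹ * Real.sqrt J) ^ 2 := by
        apply pow_le_pow_left₀ ?_ hH
        rw [hI]
        apply setIntegral_nonneg measurableSet_Ioi
        intro r _
        exact mul_nonneg (Real.exp_pos _).le (hFnn r)
    _ = lam⁻¹ * J := by
        rw [mul_pow, Real.sq_sqrt hK0, Real.sq_sqrt hJ0]



lemma ker_fubini (lam : ℝ) (hlam : 0 < lam) {G : ℝ → ℝ} (hG : Continuous G)
    (hGnn : ∀ r, 0 ≤ G r) (hGint : Integrable G) :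
    Integrable (fun t => ∫ r in Ioi t, Real.exp (lam * (t - r)) * G r) ∧
    (∫ t, (∫ r in Ioi t, Real.exp (lam * (t - r)) * G r)) = lam⁻¹ * ∫ r, G r := by
  set W : ℝ × ℝ → ℝ :=
    indicator {p : ℝ × ℝ | p.1 < p.2} (fun p => Real.exp (lam * (p.1 - p.2)) * G p.2) with hW
  have hWnn : ∀ p, 0 ≤ W p := by
    intro p
    apply indicator_nonneg
    intro q _
    exact mul_nonneg (Real.exp_pos _).le (hGnn _)
  have hWslice : ∀ t, (fun r => W (t, r))
      = indicator (Ioi t) (fun r => Real.exp (lam * (t - r)) * G r) := by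
    intro t; funext r
    by_cases h : t < r <;> simp [hW, indicator, h, Set.mem_Ioi]
  have hWslice2 : ∀ r, (fun t => W (t, r))
      = indicator (Iio r) (fun t => Real.exp (lam * (t - r)) * G r) := by
    intro r; funext t
    by_cases h : t < r <;> simp [hW, indicator, h, Set.mem_Iio]
  have hsm : MeasurableSet {p : ℝ × ℝ | p.1 < p.2} :=
    (isOpen_lt continuous_fst continuous_snd).measurableSet
  have hWm : AEStronglyMeasurable W (volume.prod volume) :=
    AEStronglyMeasurable.indicator (by continuity : Continuous
      fun p : ℝ × ℝ => Real.exp (lam * (p.1 - p.2)) * G p.2).aestronglyMeasurable hsm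
  have hslice_int : ∀ r : ℝ, Integrable (fun t => W (t, r)) := by
    intro r
    rw [hWslice2 r, integrable_indicator_iff measurableSet_Iio]
    exact (ker_integrableOn_Iio lam hlam r).mul_const (G r)
  have hslice_val : ∀ r : ℝ, (∫ t, W (t, r)) = lam⁻¹ * G r := by
    intro r
    rw [hWslice2 r, integral_indicator measurableSet_Iio,
      integral_mul_const, ker_integral_Iio lam hlam r, mul_comm]
  have hWint : Integrable W (volume.prod volume) := by
    rw [integrable_prod_iff' hWm]
    constructor
    · exact Eventually.of_forall hslice_int
    · apply Integrable.congr (hGint.const_mul lam⁻¹)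
      refine Eventually.of_forall fun r => ?_
      beta_reduce
      rw [← hslice_val r]
      exact (integral_congr_ae (Eventually.of_forall fun t =>
        Real.norm_of_nonneg (hWnn (t, r)))).symm
  have hint1 : Integrable (fun t => ∫ r, W (t, r)) := hWint.integral_prod_left
  have hswap : (∫ t, ∫ r, W (t, r)) = ∫ r, ∫ t, W (t, r) :=
    integral_integral_swap (f := fun t r => W (t, r)) (by exact hWint)
  have hres : ∀ t, (∫ r, W (t, r)) = ∫ r in Ioi t, Real.exp (lam * (t - r)) * G r := by
    intro t
    rw [hWslice t, integral_indicator measurableSet_Ioi]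
  constructor
  · exact hint1.congr (Eventually.of_forall fun t => hres t)
  · rw [← funext hres]  -- ?
    rw [hswap]
    rw [integral_congr_ae (Eventually.of_forall hslice_val), integral_const_mul]


/-- (Invertibility of `P = −d/dt + Q` on the cylinder.)
If `Q` is a bounded self-adjoint coercive operator on a real Hilbert space,
then for every continuous square-integrable `f : ℝ → H` there is a unique
continuously differentiable square-integrable `u` with `−u' + Q u = f`,
and `‖u‖_{L²} ≤ λ⁻¹ ‖f‖_{L²}`. -/
theorem cylinder_operator_invertible
    {H : Type*} [NormedAddCommGroup H] [InnerProductSpace ℝ H] [CompleteSpace H]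
    (lam : ℝ) (hlam : 0 < lam)
    (Q : H →L[ℝ] H)
    (hsa : ∀ x y : H, ⟪Q x, y⟫ = ⟪x, Q y⟫)
    (hcoercive : ∀ x : H, lam * ‖x‖ ^ 2 ≤ ⟪Q x, x⟫)
    (f : ℝ → H) (hfcont : Continuous f)
    (hf2 : MeasureTheory.Integrable (fun t : ℝ => ‖f t‖ ^ 2)) :
    ∃ u u' : ℝ → H,
      (∀ t : ℝ, HasDerivAt u (u' t) t) ∧
      Continuous u' ∧
      MeasureTheory.Integrable (fun t : ℝ => ‖u t‖ ^ 2) ∧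
      (∀ t : ℝ, -u' t + Q (u t) = f t) ∧
      Real.sqrt (∫ t : ℝ, ‖u t‖ ^ 2) ≤ lam⁻¹ * Real.sqrt (∫ t : ℝ, ‖f t‖ ^ 2) ∧
      (∀ v v' : ℝ → H,
        (∀ t : ℝ, HasDerivAt v (v' t) t) →
        Continuous v' →
        MeasureTheory.Integrable (fun t : ℝ => ‖v t‖ ^ 2) →
        (∀ t : ℝ, -v' t + Q (v t) = f t) →
        v = u) := by
  have hfn : Continuous fun r : ℝ => ‖f r‖ := hfcont.norm
  set E : ℝ → H →L[ℝ] H := fun s => NormedSpace.exp (s • (-Q)) with hE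
  have hEcont : Continuous E := continuous_iff_continuousAt.2 fun s =>
    (hasDerivAt_exp_smul_const' (𝕂 := ℝ) (-Q) s).continuousAt
  set φ : ℝ → H := fun r => E r (f r) with hφ
  have hφcont : Continuous φ := hEcont.clm_apply hfcont
  -- integrability of φ on half-lines
  have hφint : ∀ t : ℝ, IntegrableOn φ (Ioi t) := by
    intro t
    have h1 : IntegrableOn φ (Ioc t (max t 0)) := hφcont.integrableOn_Ioc
    have h2 : IntegrableOn φ (Ioi (max t 0)) := by
      have hker : IntegrableOn (fun r => Real.exp (lam * (0 - r)) * ‖f r‖) (Ioi (max t 0)) :=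
        (ker_mul_integrableOn lam hlam 0 hfn hf2).mono_set
          (Ioi_subset_Ioi (le_max_right t 0))
      refine Integrable.mono' hker hφcont.aestronglyMeasurable.restrict ?_
      rw [ae_restrict_iff' measurableSet_Ioi]
      refine Eventually.of_forall fun r hr => ?_
      have hr0 : (0:ℝ) ≤ r := le_trans (le_max_right t 0) (le_of_lt hr)
      have := semigroup_decay lam Q hcoercive (f r) hr0
      calc ‖φ r‖ ≤ Real.exp (-(lam * r)) * ‖f r‖ := this
        _ = Real.exp (lam * (0 - r)) * ‖f r‖ := by ring_nf
    have := (h1.union h2)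
    rwa [Ioc_union_Ioi_eq_Ioi (le_max_left t 0)] at this
  -- the primitive
  set C : H := ∫ r in Ioi (0:ℝ), φ r with hC
  set G : ℝ → H := fun t => C - ∫ r in (0:ℝ)..t, φ r with hGdef
  have hG : ∀ t : ℝ, HasDerivAt G (-(φ t)) t := by
    intro t
    exact (intervalIntegral.integral_hasDerivAt_right (hφcont.intervalIntegrable 0 t)
      (hφcont.stronglyMeasurableAtFilter volume (𝓝 t)) hφcont.continuousAt).const_sub C
  have hGeq : ∀ t : ℝ, G t = ∫ r in Ioi t, φ r := by
    intro t
    rcases le_total 0 t with h | h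
    · have hsplit : (∫ r in Ioi (0:ℝ), φ r)
          = (∫ r in Ioc 0 t, φ r) + ∫ r in Ioi t, φ r := by
        rw [← setIntegral_union (Ioc_disjoint_Ioi le_rfl) measurableSet_Ioi
          (((hφint 0)).mono_set Ioc_subset_Ioi_self) (hφint t),
          Ioc_union_Ioi_eq_Ioi h]
      rw [hGdef]
      simp only
      rw [intervalIntegral.integral_of_le h, hC, hsplit]
      abel
    · have hsplit : (∫ r in Ioi t, φ r)
          = (∫ r in Ioc t 0, φ r) + ∫ r in Ioi (0:ℝ), φ r := by
        rw [← setIntegral_union (Ioc_disjoint_Ioi le_rfl) measurableSet_Ioi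
          (((hφint t)).mono_set Ioc_subset_Ioi_self) (hφint 0),
          Ioc_union_Ioi_eq_Ioi h]
      rw [hGdef]
      simp only
      rw [intervalIntegral.integral_symm, intervalIntegral.integral_of_le h, hC, hsplit]
      abel
  have hGcont : Continuous G := continuous_iff_continuousAt.2 fun t => (hG t).continuousAt
  -- definition of u
  set u : ℝ → H := fun t => NormedSpace.exp (t • Q) (G t) with hu
  set u' : ℝ → H := fun t => Q (u t) - f t with hu'
  have hEQcont : Continuous fun t : ℝ => NormedSpace.exp (t • Q) :=
    continuous_iff_continuousAt.2 fun s =>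
      (hasDerivAt_exp_smul_const' (𝕂 := ℝ) Q s).continuousAt
  have hucont : Continuous u := hEQcont.clm_apply hGcont
  -- `exp (t • Q) * exp (s • (-Q)) = exp ((s - t) • (-Q))`
  have hcomm : ∀ a b : ℝ, Commute (a • Q) (b • (-Q)) := by
    intro a b
    show (a • Q) * (b • (-Q)) = (b • (-Q)) * (a • Q)
    ext x
    simp only [ContinuousLinearMap.mul_apply, ContinuousLinearMap.smul_apply,
      ContinuousLinearMap.neg_apply, ContinuousLinearMap.map_smul, map_neg, smul_neg, neg_neg]
    rw [smul_comm]
  have hgroup : ∀ t s : ℝ,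
      NormedSpace.exp (t • Q) * E s = E (s - t) := by
    intro t s
    rw [hE]
    simp only
    rw [← NormedSpace.exp_add_of_commute_of_mem_ball (𝕂 := ℝ) (hcomm t s) (by simp [NormedSpace.expSeries_radius_eq_top]) (by simp [NormedSpace.expSeries_radius_eq_top])]
    congr 1
    module
  have hinv : ∀ t : ℝ, NormedSpace.exp (t • Q) * E t = 1 := by
    intro t
    rw [hgroup t t, sub_self]
    simp [hE, NormedSpace.exp_zero]
  -- derivative of u
  have hud : ∀ t : ℝ, HasDerivAt u (u' t) t := by
    intro t
    have h := (hasDerivAt_exp_smul_const' (𝕂 := ℝ) Q t).clm_apply (hG t)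
    convert h using 1
    rw [hu']
    simp only
    rw [map_neg, ContinuousLinearMap.mul_apply]
    have : NormedSpace.exp (t • Q) (φ t) = f t := by
      rw [hφ]
      simp only
      rw [← ContinuousLinearMap.mul_apply, hinv t, ContinuousLinearMap.one_apply]
    rw [this, sub_eq_add_neg]
  have heqn : ∀ t : ℝ, -u' t + Q (u t) = f t := by
    intro t
    rw [hu']
    simp only
    abel
  have hu'cont : Continuous u' := (Q.continuous.comp hucont).sub hfcont
  -- integral representation
  have hrep : ∀ t : ℝ, u t = ∫ r in Ioi t, E (r - t) (f r) := by
    intro t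
    rw [hu]
    simp only
    rw [hGeq t, ← ContinuousLinearMap.integral_comp_comm _ (hφint t)]
    apply setIntegral_congr_fun measurableSet_Ioi
    intro r _
    rw [hφ]
    simp only
    rw [← ContinuousLinearMap.mul_apply, hgroup t r]
  -- pointwise norm bound
  have hnorm : ∀ t : ℝ, ‖u t‖ ≤ ∫ r in Ioi t, Real.exp (lam * (t - r)) * ‖f r‖ := by
    intro t
    rw [hrep t]
    refine (norm_integral_le_integral_norm _).trans ?_
    have hlhs : IntegrableOn (fun r => ‖E (r - t) (f r)‖) (Ioi t) := by
      have h0 : IntegrableOn (fun r => NormedSpace.exp (t • Q) (φ r)) (Ioi t) :=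
        ContinuousLinearMap.integrable_comp _ (hφint t)
      have h1 : IntegrableOn (fun r => E (r - t) (f r)) (Ioi t) := by
        apply h0.congr_fun ?_ measurableSet_Ioi
        intro r _
        rw [hφ]
        simp only
        rw [← ContinuousLinearMap.mul_apply, hgroup t r]
      exact h1.norm
    refine setIntegral_mono_on hlhs (ker_mul_integrableOn lam hlam t hfn hf2)
      measurableSet_Ioi fun r hr => ?_
    have hs : (0:ℝ) ≤ r - t := by simp at hr; linarith
    calc ‖E (r - t) (f r)‖ ≤ Real.exp (-(lam * (r - t))) * ‖f r‖ :=
          semigroup_decay lam Q hcoercive (f r) hs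
      _ = Real.exp (lam * (t - r)) * ‖f r‖ := by ring_nf
  have hfn2 : Continuous fun r : ℝ => ‖f r‖ ^ 2 := hfn.pow 2
  have hsq : ∀ t : ℝ, ‖u t‖ ^ 2
      ≤ lam⁻¹ * ∫ r in Ioi t, Real.exp (lam * (t - r)) * ‖f r‖ ^ 2 := by
    intro t
    calc ‖u t‖ ^ 2 ≤ (∫ r in Ioi t, Real.exp (lam * (t - r)) * ‖f r‖) ^ 2 :=
          pow_le_pow_left₀ (norm_nonneg _) (hnorm t) 2
      _ ≤ lam⁻¹ * ∫ r in Ioi t, Real.exp (lam * (t - r)) * ‖f r‖ ^ 2 :=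
          ker_CS lam hlam t hfn (fun r => norm_nonneg _) hf2
  obtain ⟨hwint, hwval⟩ :=
    ker_fubini lam hlam hfn2 (fun r => sq_nonneg _) hf2
  have hu2 : Integrable (fun t : ℝ => ‖u t‖ ^ 2) := by
    refine Integrable.mono' (hwint.const_mul lam⁻¹)
      ((hucont.norm.pow 2).aestronglyMeasurable) ?_
    refine Eventually.of_forall fun t => ?_
    rw [Real.norm_of_nonneg (by positivity)]
    exact hsq t
  have hbound : (∫ t : ℝ, ‖u t‖ ^ 2) ≤ lam⁻¹ * (lam⁻¹ * ∫ r : ℝ, ‖f r‖ ^ 2) := by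
    calc (∫ t : ℝ, ‖u t‖ ^ 2)
        ≤ ∫ t : ℝ, lam⁻¹ * ∫ r in Ioi t, Real.exp (lam * (t - r)) * ‖f r‖ ^ 2 :=
          integral_mono hu2 (hwint.const_mul lam⁻¹) hsq
      _ = lam⁻¹ * ∫ t : ℝ, ∫ r in Ioi t, Real.exp (lam * (t - r)) * ‖f r‖ ^ 2 :=
          integral_const_mul _ _
      _ = lam⁻¹ * (lam⁻¹ * ∫ r : ℝ, ‖f r‖ ^ 2) := by rw [hwval]
  have hsqrt : Real.sqrt (∫ t : ℝ, ‖u t‖ ^ 2) ≤ lam⁻¹ * Real.sqrt (∫ t : ℝ, ‖f t‖ ^ 2) := by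
    have h1 := Real.sqrt_le_sqrt hbound
    have h2 : lam⁻¹ * (lam⁻¹ * ∫ r : ℝ, ‖f r‖ ^ 2) = lam⁻¹ ^ 2 * ∫ r : ℝ, ‖f r‖ ^ 2 := by ring
    rw [h2, Real.sqrt_mul (sq_nonneg _), Real.sqrt_sq (by positivity)] at h1
    exact h1
  refine ⟨u, u', hud, hu'cont, hu2, heqn, hsqrt, ?_⟩
  -- uniqueness
  intro v v' hvd hv'c hv2 hveq
  funext t₀
  by_contra hne
  set w : ℝ → H := fun t => v t - u t with hw
  have hwd : ∀ t : ℝ, HasDerivAt w (Q (w t)) t := by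
    intro t
    have hv' : v' t = Q (v t) - f t := by
      have h := hveq t
      rw [← h]; abel
    have h := (hvd t).sub (hud t)
    rw [hv', hu'] at h
    simp only at h
    convert h using 1
    · rfl
    rw [hw]
    simp only
    rw [map_sub]
    abel
  have hwcont : Continuous w := continuous_iff_continuousAt.2 fun t => (hwd t).continuousAt
  set g : ℝ → ℝ := fun t => ⟪w t, w t⟫ with hg
  have hgd : ∀ t : ℝ, HasDerivAt g (⟪w t, Q (w t)⟫ + ⟪Q (w t), w t⟫) t :=
    fun t => (hwd t).inner ℝ (hwd t)
  have hgcont : Continuous g := continuous_iff_continuousAt.2 fun t => (hgd t).continuousAt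
  have hgnn : ∀ t, 0 ≤ g t := fun t => real_inner_self_nonneg
  have hgn : ∀ t, g t = ‖w t‖ ^ 2 := fun t => real_inner_self_eq_norm_sq (w t)
  -- monotone auxiliary function
  set h : ℝ → ℝ := fun t => g t * Real.exp (-(2 * lam) * t) with hhdef
  have hhd : ∀ t : ℝ, HasDerivAt h
      ((⟪w t, Q (w t)⟫ + ⟪Q (w t), w t⟫) * Real.exp (-(2 * lam) * t)
        + g t * (Real.exp (-(2 * lam) * t) * (-(2 * lam)))) t := by
    intro t
    exact (hgd t).mul ((Real.hasDerivAt_exp (-(2 * lam) * t)).comp t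
      (by simpa only [mul_one, id_eq] using (hasDerivAt_id t).const_mul (-(2 * lam))))
  have hmono : Monotone h := by
    apply monotone_of_deriv_nonneg (fun t => (hhd t).differentiableAt)
    intro t
    rw [(hhd t).deriv]
    have h1 : lam * ‖w t‖ ^ 2 ≤ ⟪Q (w t), w t⟫ := hcoercive (w t)
    have h2 : ⟪w t, Q (w t)⟫ = ⟪Q (w t), w t⟫ := real_inner_comm _ _
    have he : (0:ℝ) < Real.exp (-(2 * lam) * t) := Real.exp_pos _
    rw [h2, hgn t]
    nlinarith
  -- contradiction with integrability
  have hc0 : 0 < g t₀ := by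
    rcases lt_or_eq_of_le (hgnn t₀) with h | h
    · exact h
    · exfalso
      apply hne
      have : ‖w t₀‖ ^ 2 = 0 := by rw [← hgn t₀, ← h]
      have : w t₀ = 0 := by
        rwa [pow_eq_zero_iff (by norm_num), norm_eq_zero] at this
      rw [hw] at this
      simp only at this
      exact sub_eq_zero.mp this
  have hlower : ∀ t ∈ Ioi t₀, g t₀ ≤ g t := by
    intro t ht
    have h1 : h t₀ ≤ h t := hmono (le_of_lt ht)
    rw [hhdef] at h1
    simp only at h1
    have he1 : Real.exp (-(2 * lam) * t) ≤ Real.exp (-(2 * lam) * t₀) := by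
      apply Real.exp_le_exp.mpr
      have := ht.out
      nlinarith
    have he2 : (0:ℝ) < Real.exp (-(2 * lam) * t) := Real.exp_pos _
    have he3 : (0:ℝ) < Real.exp (-(2 * lam) * t₀) := Real.exp_pos _
    nlinarith [hgnn t]
  have hgint : Integrable g := by
    refine Integrable.mono' (((hv2.add hu2).const_mul 2))
      hgcont.aestronglyMeasurable ?_
    refine Eventually.of_forall fun t => ?_
    rw [Real.norm_of_nonneg (hgnn t), hgn t, hw]
    simp only [Pi.add_apply]
    have h1 := norm_sub_le (v t) (u t)
    nlinarith [h1, norm_nonneg (v t - u t), sq_nonneg (‖v t‖ - ‖u t‖),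
      norm_nonneg (v t), norm_nonneg (u t)]
  have hconst : IntegrableOn (fun _ : ℝ => g t₀) (Ioi t₀) := by
    refine Integrable.mono' hgint.integrableOn
      aestronglyMeasurable_const ?_
    rw [ae_restrict_iff' measurableSet_Ioi]
    exact Eventually.of_forall fun t ht => by
      rw [Real.norm_of_nonneg (le_of_lt hc0)]; exact hlower t ht
  rw [integrableOn_const_iff, enorm_eq_zero] at hconst
  rcases hconst with h | h
  · exact absurd h (ne_of_gt hc0)
  · rw [Real.volume_Ioi] at h
    exact absurd h (lt_irrefl _)
end

section
/- Let H be a complex Hilbert space, A : H → H a bounded self-adjoint operator, and λ > 0 such that the spectrum of A contains no point whose real part has absolute value less than λ (i.e. Spec(A) ∩ (−λ, λ) = ∅, the spectrum being real). Suppose u : [0, ∞) → H is differentiable with u'(t) = −A(u(t)) for all t ≥ 0, and there exist C ≥ 0 and 0 ≤ ε < λ with ‖u(t)‖ ≤ C e^{ε t} for all t ≥ 0. Then ‖u(t)‖ ≤ e^{−λ t} · ‖u(0)‖ for all t ≥ 0. -/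
open scoped InnerProductSpace
open Filter

section Aux

variable {H : Type*} [NormedAddCommGroup H] [InnerProductSpace ℂ H] [CompleteSpace H]

private lemma aux_inner_le {T S : H →L[ℂ] H} (h : T ≤ S) (x : H) :
    RCLike.re ⟪T x, x⟫_ℂ ≤ RCLike.re ⟪S x, x⟫_ℂ := by
  have h1 : (S - T).IsPositive := (ContinuousLinearMap.le_def T S).mp h
  have h2 := h1.inner_nonneg_left x
  simp only [ContinuousLinearMap.sub_apply, inner_sub_left, map_sub] at h2
  have h3 := ((RCLike.nonneg_iff (K := ℂ)).mp h2).1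
  rw [map_sub] at h3
  linarith

private lemma aux_normsq_deriv {v : ℝ → H} {v' : H} {t : ℝ} {s : Set ℝ}
    (hv : HasDerivWithinAt v v' s t) :
    HasDerivWithinAt (fun r => ‖v r‖ ^ 2) (2 * RCLike.re ⟪v', v t⟫_ℂ) s t := by
  have h1 := hv.inner ℂ hv
  have h2 := (RCLike.reCLM (K := ℂ)).hasFDerivAt.comp_hasDerivWithinAt t h1
  have h3 : ∀ r : ℝ, ‖v r‖ ^ 2 = RCLike.re (K := ℂ) ⟪v r, v r⟫_ℂ :=
    fun r => (inner_self_eq_norm_sq _).symm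
  have h4 : RCLike.re (K := ℂ) (⟪v t, v'⟫_ℂ + ⟪v', v t⟫_ℂ) = 2 * RCLike.re ⟪v', v t⟫_ℂ := by
    rw [map_add, inner_re_symm]; ring
  rw [← h4]
  exact h2.congr (fun y _ => h3 y) (h3 t)

private lemma aux_mono {g g' : ℝ → ℝ}
    (hg : ∀ t ∈ Set.Ici (0:ℝ), HasDerivWithinAt g (g' t) (Set.Ici 0) t)
    (h0 : ∀ t ∈ Set.Ioi (0:ℝ), 0 ≤ g' t) : MonotoneOn g (Set.Ici 0) := by
  refine monotoneOn_of_hasDerivWithinAt_nonneg (f' := g') (convex_Ici 0)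
    (fun t ht => (hg t ht).continuousWithinAt) ?_ ?_
  · intro x hx
    rw [interior_Ici] at hx ⊢
    exact (hg x (Set.Ioi_subset_Ici_self hx)).mono Set.Ioi_subset_Ici_self
  · intro x hx
    rw [interior_Ici] at hx
    exact h0 x hx

private lemma aux_anti {g g' : ℝ → ℝ}
    (hg : ∀ t ∈ Set.Ici (0:ℝ), HasDerivWithinAt g (g' t) (Set.Ici 0) t)
    (h0 : ∀ t ∈ Set.Ioi (0:ℝ), g' t ≤ 0) : AntitoneOn g (Set.Ici 0) := by
  refine antitoneOn_of_hasDerivWithinAt_nonpos (f' := g') (convex_Ici 0)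
    (fun t ht => (hg t ht).continuousWithinAt) ?_ ?_
  · intro x hx
    rw [interior_Ici] at hx ⊢
    exact (hg x (Set.Ioi_subset_Ici_self hx)).mono Set.Ioi_subset_Ici_self
  · intro x hx
    rw [interior_Ici] at hx
    exact h0 x hx

end Aux

set_option maxHeartbeats 2000000 in
/-- Let `A` be a bounded self-adjoint operator on a complex
Hilbert space whose spectrum contains no point with `|Re z| < λ`, where
`λ > 0`. If `u' = −A u` on `[0, ∞)` and `u` grows at most like `C e^{ε t}`
for some `0 ≤ ε < λ`, then `‖u(t)‖ ≤ e^{−λ t} ‖u(0)‖` for all `t ≥ 0`. -/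
theorem selfadjoint_gap_subexponential_implies_decay
    {H : Type*} [NormedAddCommGroup H] [InnerProductSpace ℂ H] [CompleteSpace H]
    (A : H →L[ℂ] H) (hA : IsSelfAdjoint A)
    (lam : ℝ) (hlam : 0 < lam)
    (hspec : ∀ z ∈ spectrum ℂ A, ¬ |z.re| < lam)
    (u : ℝ → H)
    (hu : ∀ t ∈ Set.Ici (0 : ℝ), HasDerivWithinAt u (-(A (u t))) (Set.Ici 0) t)
    (C ε : ℝ) (hC : 0 ≤ C) (hε : 0 ≤ ε) (heps_lt : ε < lam)
    (hgrowth : ∀ t ∈ Set.Ici (0 : ℝ), ‖u t‖ ≤ C * Real.exp (ε * t)) :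
    ∀ t ∈ Set.Ici (0 : ℝ), ‖u t‖ ≤ Real.exp (-(lam * t)) * ‖u 0‖ := by
  -- the real spectrum avoids (-lam, lam)
  have hspecR : ∀ x ∈ spectrum ℝ A, lam ≤ |x| := by
    intro x hx
    have h := hspec (x : ℂ) (spectrum.algebraMap_mem ℂ hx)
    simpa using not_lt.mp h
  -- the spectral projection onto the negative part of the spectrum
  set f : ℝ → ℝ := fun x => if x < 0 then 1 else 0 with hfdef
  have hfc : ContinuousOn f (spectrum ℝ A) := by
    intro x hx
    rcases lt_or_ge x 0 with hx0 | hx0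
    · refine ContinuousWithinAt.congr_of_eventuallyEq continuousWithinAt_const ?_ (if_pos hx0)
      exact Filter.eventuallyEq_of_mem
        (mem_nhdsWithin_of_mem_nhds (Iio_mem_nhds hx0)) fun y hy => if_pos hy
    · have hxpos : 0 < x := lt_of_lt_of_le hlam (le_trans (hspecR x hx) (le_of_eq (abs_of_nonneg hx0)))
      refine ContinuousWithinAt.congr_of_eventuallyEq continuousWithinAt_const ?_
        (if_neg (not_lt.mpr hx0))
      exact Filter.eventuallyEq_of_mem
        (mem_nhdsWithin_of_mem_nhds (Ioi_mem_nhds hxpos))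
        fun y hy => if_neg (not_lt.mpr (le_of_lt hy))
  set g : ℝ → ℝ := fun x => 1 - f x with hgdef
  have hgc : ContinuousOn g (spectrum ℝ A) := continuousOn_const.sub hfc
  set P : H →L[ℂ] H := cfc f A with hPdef
  set Q : H →L[ℂ] H := cfc g A with hQdef
  have hPsa : IsSelfAdjoint P := cfc_predicate f A
  have hQsa : IsSelfAdjoint Q := cfc_predicate g A
  have hQP : Q = 1 - P := by
    rw [hQdef, hgdef]
    rw [cfc_sub (fun _ : ℝ => (1:ℝ)) f A continuousOn_const hfc]
    congr 1
    rw [show (fun _ : ℝ => (1:ℝ)) = (1 : ℝ → ℝ) from rfl, cfc_one ℝ A hA]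
  -- commutation of P with A
  have hcomm : A * P = P * A := by
    have e1 : cfc (fun x : ℝ => x * f x) A = A * P := by
      rw [cfc_mul (fun x : ℝ => x) f A continuousOn_id hfc, cfc_id' ℝ A hA]
    have e2 : cfc (fun x : ℝ => f x * x) A = P * A := by
      rw [cfc_mul f (fun x : ℝ => x) A hfc continuousOn_id, cfc_id' ℝ A hA]
    rw [← e1, ← e2]
    exact cfc_congr fun x _ => mul_comm x (f x)
  have hPA : ∀ x : H, P (A x) = A (P x) := by
    intro x
    have := DFunLike.congr_fun hcomm x
    simpa [ContinuousLinearMap.mul_apply] using this.symm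
  -- operator inequalities
  have ineq1 : P * A * P ≤ (-lam) • (P * P) := by
    have l1 : cfc (fun x : ℝ => f x * x * f x) A = P * A * P := by
      rw [cfc_mul (fun x : ℝ => f x * x) f A (hfc.mul continuousOn_id) hfc,
        cfc_mul f (fun x : ℝ => x) A hfc continuousOn_id, cfc_id' ℝ A hA]
    have l2 : cfc (fun x : ℝ => -lam * (f x * f x)) A = (-lam) • (P * P) := by
      rw [cfc_const_mul (-lam) (fun x : ℝ => f x * f x) A (hfc.mul hfc),
        cfc_mul f f A hfc hfc]
    rw [← l1, ← l2]
    refine cfc_mono (fun x hx => ?_) ((hfc.mul continuousOn_id).mul hfc)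
      (continuousOn_const.mul (hfc.mul hfc))
    by_cases hx0 : x < 0
    · have habs : lam ≤ -x := by
        have := hspecR x hx
        rwa [abs_of_neg hx0] at this
      simp only [hfdef, if_pos hx0]
      nlinarith
    · simp [hfdef, if_neg hx0]
  have ineq2 : lam • (Q * Q) ≤ Q * A * Q := by
    have l1 : cfc (fun x : ℝ => g x * x * g x) A = Q * A * Q := by
      rw [cfc_mul (fun x : ℝ => g x * x) g A (hgc.mul continuousOn_id) hgc,
        cfc_mul g (fun x : ℝ => x) A hgc continuousOn_id, cfc_id' ℝ A hA]
    have l2 : cfc (fun x : ℝ => lam * (g x * g x)) A = lam • (Q * Q) := by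
      rw [cfc_const_mul lam (fun x : ℝ => g x * g x) A (hgc.mul hgc),
        cfc_mul g g A hgc hgc]
    rw [← l1, ← l2]
    refine cfc_mono (fun x hx => ?_) (continuousOn_const.mul (hgc.mul hgc))
      ((hgc.mul continuousOn_id).mul hgc)
    by_cases hx0 : x < 0
    · simp [hgdef, hfdef, if_pos hx0]
    · have habs : lam ≤ x := by
        have := hspecR x hx
        rwa [abs_of_nonneg (not_lt.mp hx0)] at this
      simp only [hgdef, hfdef, if_neg hx0, sub_zero]
      nlinarith
  -- selfadjointness at vector level
  have hPadj : ContinuousLinearMap.adjoint P = P := by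
    rw [← ContinuousLinearMap.star_eq_adjoint]; exact hPsa
  have hQadj : ContinuousLinearMap.adjoint Q = Q := by
    rw [← ContinuousLinearMap.star_eq_adjoint]; exact hQsa
  have hPinner : ∀ y x : H, ⟪P y, x⟫_ℂ = ⟪y, P x⟫_ℂ := by
    intro y x
    conv_lhs => rw [← hPadj]
    exact ContinuousLinearMap.adjoint_inner_left P x y
  have hQinner : ∀ y x : H, ⟪Q y, x⟫_ℂ = ⟪y, Q x⟫_ℂ := by
    intro y x
    conv_lhs => rw [← hQadj]
    exact ContinuousLinearMap.adjoint_inner_left Q x y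
  -- vector level inequalities
  have vineq1 : ∀ x : H, RCLike.re ⟪A (P x), P x⟫_ℂ ≤ -lam * ‖P x‖ ^ 2 := by
    intro x
    have h1 := aux_inner_le ineq1 x
    simp only [ContinuousLinearMap.mul_apply, ContinuousLinearMap.smul_apply] at h1
    rw [hPinner (A (P x)) x] at h1
    have h2 : ((-lam : ℝ) • (P (P x)) : H) = ((-lam : ℂ) • (P (P x)) : H) := by
      rw [RCLike.real_smul_eq_coe_smul (K := ℂ)]; norm_num
    rw [h2, inner_smul_left, hPinner (P x) x] at h1
    have h3 : RCLike.re ((starRingEnd ℂ) (-lam : ℂ) * ⟪P x, P x⟫_ℂ)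
        = -lam * ‖P x‖ ^ 2 := by
      rw [← inner_self_eq_norm_sq (𝕜 := ℂ) (P x)]
      simp [Complex.mul_re]
    rw [h3] at h1
    exact h1
  have vineq2 : ∀ x : H, lam * ‖Q x‖ ^ 2 ≤ RCLike.re ⟪A (Q x), Q x⟫_ℂ := by
    intro x
    have h1 := aux_inner_le ineq2 x
    simp only [ContinuousLinearMap.mul_apply, ContinuousLinearMap.smul_apply] at h1
    rw [hQinner (A (Q x)) x] at h1
    have h2 : ((lam : ℝ) • (Q (Q x)) : H) = ((lam : ℂ) • (Q (Q x)) : H) :=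
      RCLike.real_smul_eq_coe_smul (K := ℂ) lam (Q (Q x))
    rw [h2, inner_smul_left, hQinner (Q x) x] at h1
    have h3 : RCLike.re ((starRingEnd ℂ) (lam : ℂ) * ⟪Q x, Q x⟫_ℂ)
        = lam * ‖Q x‖ ^ 2 := by
      rw [← inner_self_eq_norm_sq (𝕜 := ℂ) (Q x)]
      simp [Complex.mul_re]
    rw [h3] at h1
    exact h1
  -- the projected solution
  set v : ℝ → H := fun t => P (u t) with hvdef
  have hv : ∀ t ∈ Set.Ici (0:ℝ), HasDerivWithinAt v (-(A (v t))) (Set.Ici 0) t := by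
    intro t ht
    have h1 := ((P.restrictScalars ℝ).hasFDerivAt (x := u t)).comp_hasDerivWithinAt t (hu t ht)
    have h2 : (P.restrictScalars ℝ) (-(A (u t))) = -(A (v t)) := by
      simp only [ContinuousLinearMap.coe_restrictScalars', hvdef, map_neg, hPA]
    rw [h2] at h1
    exact h1
  -- first energy function: exp (-2 lam t) ‖v t‖² is monotone
  set φ : ℝ → ℝ := fun t => Real.exp (-(2*lam)*t) * ‖v t‖ ^ 2 with hφdef
  set φ' : ℝ → ℝ := fun t => (-(2*lam) * Real.exp (-(2*lam)*t)) * ‖v t‖ ^ 2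
      + Real.exp (-(2*lam)*t) * (2 * RCLike.re ⟪-(A (v t)), v t⟫_ℂ) with hφ'def
  have hφderiv : ∀ t ∈ Set.Ici (0:ℝ), HasDerivWithinAt φ (φ' t) (Set.Ici 0) t := by
    intro t ht
    have he : HasDerivWithinAt (fun s => Real.exp (-(2*lam)*s))
        (-(2*lam) * Real.exp (-(2*lam)*t)) (Set.Ici 0) t := by
      have h := ((hasDerivAt_id t).const_mul (-(2*lam))).exp
      simpa [mul_comm] using h.hasDerivWithinAt
    exact he.mul (aux_normsq_deriv (hv t ht))
  have hφ'0 : ∀ t ∈ Set.Ioi (0:ℝ), 0 ≤ φ' t := by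
    intro t ht
    have h2 := vineq1 (u t)
    have h3 : RCLike.re ⟪-(A (v t)), v t⟫_ℂ = - RCLike.re ⟪A (v t), v t⟫_ℂ := by
      rw [inner_neg_left]; simp
    have hep := Real.exp_pos (-(2*lam)*t)
    rw [hφ'def]
    simp only []
    rw [h3]
    nlinarith [h2, hep]
  have hmono : MonotoneOn φ (Set.Ici 0) := aux_mono hφderiv hφ'0
  -- φ tends to 0 along the growth bound
  have hφ0 : ∀ s ∈ Set.Ici (0:ℝ), φ s ≤ 0 := by
    intro s hs
    have hb : ∀ t, s ≤ t → φ t ≤ (‖P‖^2 * C^2) * Real.exp ((2*(ε - lam))*t) := by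
      intro t hts
      have ht0 : (0:ℝ) ≤ t := le_trans hs hts
      have h1 : ‖v t‖ ≤ ‖P‖ * (C * Real.exp (ε*t)) := by
        refine le_trans (P.le_opNorm (u t)) ?_
        exact mul_le_mul_of_nonneg_left (hgrowth t ht0) (norm_nonneg P)
      have h2 : ‖v t‖^2 ≤ (‖P‖ * (C * Real.exp (ε*t)))^2 := by
        exact pow_le_pow_left₀ (norm_nonneg _) h1 2
      have h3 : Real.exp (-(2*lam)*t) * (‖P‖ * (C * Real.exp (ε*t)))^2
          = (‖P‖^2 * C^2) * Real.exp ((2*(ε - lam))*t) := by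
        have hsq : Real.exp (ε*t) ^ 2 = Real.exp (2*(ε*t)) := by
          rw [sq, ← Real.exp_add]; ring_nf
        have h4 : Real.exp ((2*(ε - lam))*t)
            = Real.exp (-(2*lam)*t) * Real.exp (2*(ε*t)) := by
          rw [← Real.exp_add]; ring_nf
        rw [mul_pow, mul_pow, hsq, h4]; ring
      calc φ t ≤ Real.exp (-(2*lam)*t) * (‖P‖ * (C * Real.exp (ε*t)))^2 :=
            mul_le_mul_of_nonneg_left h2 (Real.exp_pos _).le
        _ = (‖P‖^2 * C^2) * Real.exp ((2*(ε - lam))*t) := h3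
    have hlim : Tendsto (fun t => (‖P‖^2*C^2) * Real.exp ((2*(ε-lam))*t)) atTop (nhds 0) := by
      have h2 : Tendsto (fun t : ℝ => (2*(ε-lam))*t) atTop atBot :=
        (tendsto_const_mul_atBot_of_neg (by linarith)).mpr tendsto_id
      have h4 := (Real.tendsto_exp_atBot.comp h2).const_mul (‖P‖^2*C^2)
      simpa using h4
    refine ge_of_tendsto hlim (Filter.eventually_atTop.mpr ⟨s, fun t hts => ?_⟩)
    exact le_trans (hmono hs (le_trans hs hts) hts) (hb t hts)
  have hPzero : ∀ t ∈ Set.Ici (0:ℝ), P (u t) = 0 := by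
    intro t ht
    have h1 : Real.exp (-(2*lam)*t) * ‖v t‖ ^ 2 ≤ 0 := hφ0 t ht
    have hep := Real.exp_pos (-(2*lam)*t)
    have h2 : ‖v t‖^2 ≤ 0 := by nlinarith [h1]
    have h3 : ‖v t‖ = 0 := by nlinarith [norm_nonneg (v t), sq_nonneg ‖v t‖]
    exact norm_eq_zero.mp h3
  -- second energy function: exp (2 lam t) ‖u t‖² is antitone
  set ψ : ℝ → ℝ := fun t => Real.exp ((2*lam)*t) * ‖u t‖ ^ 2 with hψdef
  set ψ' : ℝ → ℝ := fun t => ((2*lam) * Real.exp ((2*lam)*t)) * ‖u t‖ ^ 2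
      + Real.exp ((2*lam)*t) * (2 * RCLike.re ⟪-(A (u t)), u t⟫_ℂ) with hψ'def
  have hψderiv : ∀ t ∈ Set.Ici (0:ℝ), HasDerivWithinAt ψ (ψ' t) (Set.Ici 0) t := by
    intro t ht
    have he : HasDerivWithinAt (fun s => Real.exp ((2*lam)*s))
        ((2*lam) * Real.exp ((2*lam)*t)) (Set.Ici 0) t := by
      have h := ((hasDerivAt_id t).const_mul (2*lam)).exp
      simpa [mul_comm] using h.hasDerivWithinAt
    exact he.mul (aux_normsq_deriv (hu t ht))
  have hψ'0 : ∀ t ∈ Set.Ioi (0:ℝ), ψ' t ≤ 0 := by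
    intro t ht
    have hQu : Q (u t) = u t := by
      rw [hQP]
      simp [ContinuousLinearMap.sub_apply, hPzero t (Set.Ioi_subset_Ici_self ht)]
    have h2 := vineq2 (u t)
    rw [hQu] at h2
    have h3 : RCLike.re ⟪-(A (u t)), u t⟫_ℂ = - RCLike.re ⟪A (u t), u t⟫_ℂ := by
      rw [inner_neg_left]; simp
    have hep := Real.exp_pos ((2*lam)*t)
    rw [hψ'def]
    simp only []
    rw [h3]
    nlinarith [h2, hep]
  have hanti : AntitoneOn ψ (Set.Ici 0) := aux_anti hψderiv hψ'0
  -- conclusion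
  intro t ht
  have h1 : ψ t ≤ ψ 0 := hanti (le_refl (0:ℝ)) ht ht
  have h2 : ψ 0 = ‖u 0‖ ^ 2 := by
    rw [hψdef]; simp
  have hep := Real.exp_pos ((2*lam)*t)
  have hinv : Real.exp (-(lam*t)) ^ 2 * Real.exp ((2*lam)*t) = 1 := by
    rw [sq, ← Real.exp_add, ← Real.exp_add, ← Real.exp_zero]
    ring_nf
  have h1' : Real.exp ((2*lam)*t) * ‖u t‖^2 ≤ ‖u 0‖^2 := by
    rw [← h2]; exact h1
  have key : ‖u t‖ ^ 2 ≤ (Real.exp (-(lam*t)) * ‖u 0‖) ^ 2 := by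
    rw [mul_pow]
    have h5 := mul_le_mul_of_nonneg_left h1' (sq_nonneg (Real.exp (-(lam*t))))
    calc ‖u t‖ ^ 2 = Real.exp (-(lam*t))^2 * Real.exp ((2*lam)*t) * ‖u t‖^2 := by
          rw [hinv, one_mul]
      _ = Real.exp (-(lam*t))^2 * (Real.exp ((2*lam)*t) * ‖u t‖^2) := by ring
      _ ≤ Real.exp (-(lam*t))^2 * ‖u 0‖^2 := h5
  have := Real.sqrt_le_sqrt key
  rwa [Real.sqrt_sq (norm_nonneg _), Real.sqrt_sq (by positivity)] at this
end
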